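/- Let G = (V,E) be a 2-connected finite simple graph satisfying |E| = 2(|V|−1) and |E(S)| = 2|S|−3 for every good flat S ⊆ V. Suppose {v_1, v_2} ⊆ V is a separating set and let H_1, …, H_n be the connected components of G∖{v_1, v_2}. Then: (1) n = 2; (2) there is no edge between v_1 and v_2 in G; (3) for every i, the induced subgraph G∖H_i (the subgraph induced on V minus the vertices of H_i) is 2-connected. -/

import Mathlib

open SimpleGraph
open scoped Pointwise

namespace Gor

/-! ### Graph-theoretic notions -/

/-- A graph is `2`-connected if it is connected and remains connected after deletion of any
single vertex.  A single edge `K₂` counts as `2`-connected. -/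
def IsTwoConnected {V : Type*} (G : SimpleGraph V) : Prop :=
  G.Connected ∧ ∀ v : V, (G.induce {u : V | u ≠ v}).Connected

/-- `E(S)`: the set of edges of `G` with both endpoints in `S`. -/
def edgesIn {V : Type*} (G : SimpleGraph V) (S : Set V) : Set (Sym2 V) :=
  {e ∈ G.edgeSet | ∀ v ∈ e, v ∈ S}

/-- The simple graph obtained from `G` by contracting all edges in `F`: its vertices are the
connected components of the graph with edge set `F`, two being adjacent if some edge of `G`
joins them. -/
def contractEdges {V : Type*} (G : SimpleGraph V) (F : Set (Sym2 V)) :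
    SimpleGraph (SimpleGraph.fromEdgeSet F).ConnectedComponent :=
  SimpleGraph.fromRel fun c d => ∃ u v : V, G.Adj u v ∧
    (SimpleGraph.fromEdgeSet F).connectedComponentMk u = c ∧
    (SimpleGraph.fromEdgeSet F).connectedComponentMk v = d

/-- `S` is a good flat of `G`: the induced subgraph `G[S]` is `2`-connected and the contraction
of all edges of `E(S)` in `G` is `2`-connected. -/
def IsGoodFlat {V : Type*} (G : SimpleGraph V) (S : Set V) : Prop :=
  IsTwoConnected (G.induce S) ∧ IsTwoConnected (contractEdges G (edgesIn G S))

/-- The weight function `w : E → {1, δ-1}` with `w e = 1` whenever `G∖e` is `2`-connected and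
`w e = δ - 1` whenever `G/e` is `2`-connected. -/
def IsCanonicalWeight {V : Type*} (G : SimpleGraph V) (δ : ℕ) (w : Sym2 V → ℕ) : Prop :=
  (∀ e ∈ G.edgeSet, w e = 1 ∨ w e = δ - 1) ∧
  (∀ e ∈ G.edgeSet, IsTwoConnected (G.deleteEdges {e}) → w e = 1) ∧
  (∀ e ∈ G.edgeSet, IsTwoConnected (contractEdges G {e}) → w e = δ - 1)

/-- A `2`-connected graph `G` satisfies `(♠)_δ` via the weight function `w`. -/
def SatisfiesSpade {V : Type*} (G : SimpleGraph V) (δ : ℕ) (w : Sym2 V → ℕ) : Prop :=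
  IsTwoConnected G ∧ IsCanonicalWeight G δ w ∧
  (∑ᶠ e ∈ G.edgeSet, w e) = δ * (Nat.card V - 1) ∧
  ∀ S : Set V, IsGoodFlat G S → (∑ᶠ e ∈ edgesIn G S, w e) + 1 = δ * (S.ncard - 1)

/-- The number of `2`-connected components (blocks) of a graph: the number of inclusion-maximal
vertex subsets inducing a `2`-connected subgraph. -/
noncomputable def numBlocks {V : Type*} (G : SimpleGraph V) : ℕ :=
  {S : Set V | IsTwoConnected (G.induce S) ∧
    ∀ T : Set V, S ⊆ T → IsTwoConnected (G.induce T) → S = T}.ncard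

/-! ### Lattice polytopes and the Gorenstein property -/

/-- A point of `ℝ^η` is a lattice point if all its coordinates are integers. -/
def IsLatticePoint {η : Type*} (x : η → ℝ) : Prop := ∀ i, ∃ z : ℤ, x i = z

/-- The cone over a polytope `P ⊆ ℝ^η`, living in `ℝ^η × ℝ`. -/
def coneOver {η : Type*} (P : Set (η → ℝ)) : Set ((η → ℝ) × ℝ) :=
  {y | ∃ t : ℝ, ∃ p ∈ P, 0 ≤ t ∧ y = (t • p, t)}

/-- The lattice affinely spanned by the lattice points of `P`, placed at height one;
i.e. the subgroup of `ℝ^η × ℝ` generated by `{(p, 1) : p a lattice point of P}`. -/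
def coneLattice {η : Type*} (P : Set (η → ℝ)) : Submodule ℤ ((η → ℝ) × ℝ) :=
  Submodule.span ℤ {y | ∃ p ∈ P, IsLatticePoint p ∧ y = (p, 1)}

/-- `h` is a linear form cutting out a facet-supporting hyperplane of the cone over `P`:
it is nonnegative on the cone and vanishes on a subset of the cone spanning one dimension less
than the cone itself. -/
def IsFacetForm {η : Type*} (P : Set (η → ℝ)) (h : ((η → ℝ) × ℝ) →ₗ[ℝ] ℝ) : Prop :=
  (∀ y ∈ coneOver P, 0 ≤ h y) ∧
  Module.finrank ℝ (Submodule.span ℝ {y ∈ coneOver P | h y = 0}) + 1 =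
    Module.finrank ℝ (Submodule.span ℝ (coneOver P))

/-- `h` is reduced with respect to the lattice spanned by `P`: it takes integer values on the
lattice and attains the value `1` there. -/
def IsReducedForm {η : Type*} (P : Set (η → ℝ)) (h : ((η → ℝ) × ℝ) →ₗ[ℝ] ℝ) : Prop :=
  (∀ y ∈ coneLattice P, ∃ z : ℤ, h y = z) ∧ ∃ y ∈ coneLattice P, h y = 1

/-- A polytope `P`, regarded as full-dimensional in the affine lattice it spans, is
`δ`-Gorenstein if there is a lattice point `v ∈ δP` with `h (v, δ) = 1` for the reduced
equation `h` of every facet-supporting hyperplane of the cone over `P`. -/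
def IsDeltaGorenstein {η : Type*} (P : Set (η → ℝ)) (δ : ℕ) : Prop :=
  ∃ v : η → ℝ, v ∈ (δ : ℝ) • P ∧ (v, (δ : ℝ)) ∈ coneLattice P ∧
    ∀ h : ((η → ℝ) × ℝ) →ₗ[ℝ] ℝ, IsFacetForm P h → IsReducedForm P h → h (v, (δ : ℝ)) = 1

/-- A polytope is Gorenstein if it is `δ`-Gorenstein for some positive integer `δ`. -/
def IsGorenstein {η : Type*} (P : Set (η → ℝ)) : Prop :=
  ∃ δ : ℕ, 0 < δ ∧ IsDeltaGorenstein P δ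

/-! ### Graphic matroids of simple graphs and their polytopes -/

/-- An independent set of the graphic matroid of `G`: a set of edges forming a forest. -/
def IsGraphicIndep {V : Type*} (G : SimpleGraph V) (I : Set (Sym2 V)) : Prop :=
  I ⊆ G.edgeSet ∧ (SimpleGraph.fromEdgeSet I).IsAcyclic

/-- A basis of the graphic matroid of `G`: a maximal forest (spanning forest). -/
def IsGraphicBasis {V : Type*} (G : SimpleGraph V) (B : Set (Sym2 V)) : Prop :=
  IsGraphicIndep G B ∧ ∀ e ∈ G.edgeSet, e ∉ B → ¬ IsGraphicIndep G (insert e B)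

/-- The base polytope `B(M(G))` of the graphic matroid of `G`: the convex hull of the
indicator vectors of the bases. -/
def basePolytope {V : Type*} (G : SimpleGraph V) : Set (Sym2 V → ℝ) :=
  convexHull ℝ {x | ∃ B : Set (Sym2 V), IsGraphicBasis G B ∧
    x = B.indicator fun _ => (1 : ℝ)}

/-- The base polytope `B(M(G))`, regarded inside `ℝ^E` where `E` is the edge set of `G`. -/
def basePolytopeE {V : Type*} (G : SimpleGraph V) : Set (↥G.edgeSet → ℝ) :=
  convexHull ℝ {x | ∃ B : Set (Sym2 V), IsGraphicBasis G B ∧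
    x = (Subtype.val ⁻¹' B).indicator fun _ => (1 : ℝ)}

/-- A homogeneous inequality `g x ≥ 0` is valid for `P` and defines a facet (a supporting
hyperplane whose intersection with `P` has affine dimension one less than `P`). -/
def IsSupportingFaceIneq {α : Type*} (P : Set (α → ℝ)) (g : (α → ℝ) → ℝ) : Prop :=
  (∀ x ∈ P, 0 ≤ g x) ∧
  Module.finrank ℝ (vectorSpan ℝ {x ∈ P | g x = 0}) + 1 =
    Module.finrank ℝ (vectorSpan ℝ P)

/-! ### Multigraphs -/

/-- A finite undirected loopless multigraph on a vertex type `V` with edge type `E`. -/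
structure Multigraph (V E : Type*) where
  ends : E → Sym2 V
  loopless : ∀ e, ¬ (ends e).IsDiag

/-- The underlying simple graph of a multigraph. -/
def Multigraph.toSimple {V E : Type*} (G : Multigraph V E) : SimpleGraph V :=
  SimpleGraph.fromEdgeSet (Set.range G.ends)

/-- `E(S)` for a multigraph: the set of edges with both endpoints in `S`. -/
def Multigraph.edgesIn {V E : Type*} (G : Multigraph V E) (S : Set V) : Set E :=
  {e | ∀ v ∈ G.ends e, v ∈ S}

/-- A set of edges of a multigraph is a forest (an independent set of the graphic matroid):
no two parallel edges and no cycle. -/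
def IsMultiForest {V E : Type*} (G : Multigraph V E) (I : Set E) : Prop :=
  Set.InjOn G.ends I ∧ (SimpleGraph.fromEdgeSet (G.ends '' I)).IsAcyclic

/-- The independence polytope `P(M(G))` of the graphic matroid of a multigraph `G`. -/
def multiIndepPolytope {V E : Type*} (G : Multigraph V E) : Set (E → ℝ) :=
  convexHull ℝ {x | ∃ I : Set E, IsMultiForest G I ∧ x = I.indicator fun _ => (1 : ℝ)}

/-- The rank of a set of edges in the graphic matroid of a multigraph. -/
noncomputable def mrank {V E : Type*} (G : Multigraph V E) (A : Set E) : ℕ :=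
  sSup {n | ∃ I ⊆ A, IsMultiForest G I ∧ I.ncard = n}

/-- A flat of the graphic matroid of a multigraph: adding any further edge increases the rank. -/
def IsGraphicFlat {V E : Type*} (G : Multigraph V E) (A : Set E) : Prop :=
  ∀ e : E, e ∉ A → mrank G (insert e A) ≠ mrank G A

/-- A circuit of the graphic matroid of a multigraph: a minimal dependent set of edges. -/
def IsMultiCircuit {V E : Type*} (G : Multigraph V E) (C : Set E) : Prop :=
  ¬ IsMultiForest G C ∧ ∀ C' ⊂ C, IsMultiForest G C'

/-- The restriction of the graphic matroid of `G` to `A` is a connected matroid: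
`A` is nonempty and any two distinct elements of `A` lie on a common circuit inside `A`. -/
def ConnectedRestriction {V E : Type*} (G : Multigraph V E) (A : Set E) : Prop :=
  A.Nonempty ∧ ∀ e ∈ A, ∀ f ∈ A, e ≠ f → ∃ C ⊆ A, IsMultiCircuit G C ∧ e ∈ C ∧ f ∈ C

/-- `G` is the `m`-blow-up of the simple graph `H`: every edge of `H` is replaced by exactly
`m` parallel edges and there are no other edges. -/
def IsBlowUp {V E : Type*} (G : Multigraph V E) (m : ℕ) (H : SimpleGraph V) : Prop :=
  (∀ p ∈ H.edgeSet, {e : E | G.ends e = p}.ncard = m) ∧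
  ∀ p : Sym2 V, p ∉ H.edgeSet → {e : E | G.ends e = p} = ∅

/-- The condition `(♣)_δ`: `(δ-1)|E(S)| + 1 = δ(|S|-1)` for every vertex subset `S` inducing a
`2`-connected subgraph. -/
def ClubCond {V : Type*} (H : SimpleGraph V) (δ : ℕ) : Prop :=
  ∀ S : Set V, IsTwoConnected (H.induce S) →
    (δ - 1) * (edgesIn H S).ncard + 1 = δ * (S.ncard - 1)

/-! ### Chordality, `K₄` minors, cycle attachments -/

/-- A chordless cycle: a cycle such that every edge of `G` between vertices of the cycle is an
edge of the cycle. -/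
def IsChordlessCycle {V : Type*} (G : SimpleGraph V) {v : V} (c : G.Walk v v) : Prop :=
  c.IsCycle ∧ ∀ e ∈ edgesIn G {u : V | u ∈ c.support}, e ∈ c.edges

/-- `G` is `δ`-chordal: every cycle without a chord has exactly `δ + 1` edges. -/
def IsDeltaChordal {V : Type*} (G : SimpleGraph V) (δ : ℕ) : Prop :=
  ∀ (v : V) (c : G.Walk v v), IsChordlessCycle G c → c.length = δ + 1

/-- `G` has a `K₄` minor: there are four disjoint nonempty connected branch sets pairwise
joined by an edge. -/
def HasK4Minor {V : Type*} (G : SimpleGraph V) : Prop :=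
  ∃ B : Fin 4 → Set V, (∀ i, (B i).Nonempty) ∧ (∀ i, (G.induce (B i)).Connected) ∧
    (Pairwise fun i j => Disjoint (B i) (B j)) ∧
    (Pairwise fun i j => ∃ u ∈ B i, ∃ v ∈ B j, G.Adj u v)

/-- One step of attaching a new `(δ+1)`-cycle to an edge: `B` is obtained from `A` by adding
`δ - 1` new vertices forming a path of length `δ` between the endpoints of an edge of
`H[A]`, these being all new edges. -/
def AttachStep {V : Type*} (H : SimpleGraph V) (δ : ℕ) (A B : Set V) : Prop :=
  ∃ q : Fin (δ + 1) → V, Function.Injective q ∧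
    H.Adj (q 0) (q (Fin.last δ)) ∧ q 0 ∈ A ∧ q (Fin.last δ) ∈ A ∧
    (∀ i : Fin (δ + 1), i ≠ 0 → i ≠ Fin.last δ → q i ∉ A) ∧
    B = A ∪ {x | ∃ i : Fin (δ + 1), i ≠ 0 ∧ i ≠ Fin.last δ ∧ q i = x} ∧
    edgesIn H B = edgesIn H A ∪ {e | ∃ i : Fin δ, e = s(q i.castSucc, q i.succ)}

/-- `H` can be constructed from the clique `K₂` by repeatedly attaching new `(δ+1)`-cycles to
edges of the preceding graph. -/
def ConstructibleFromK2 {V : Type*} (H : SimpleGraph V) (δ : ℕ) : Prop :=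
  ∃ (k : ℕ) (S : Fin (k + 1) → Set V),
    (∃ u v : V, H.Adj u v ∧ S 0 = {u, v}) ∧
    S (Fin.last k) = Set.univ ∧
    ∀ i : Fin k, AttachStep H δ (S i.castSucc) (S i.succ)

/-! ### Gluings, subdivisions, collisions, ears -/

/-- `G` (with distinguished edge `ab`) is the gluing of the graphs `Gs i` along the edges
`es i`: the disjoint union with all the edges `es i` identified to the single edge `ab`. -/
def IsGluing {ι : Type*} {Vf : ι → Type*} {W : Type*} (Gs : ∀ i, SimpleGraph (Vf i))
    (es : ∀ i, Sym2 (Vf i)) (G : SimpleGraph W) (a b : W) : Prop :=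
  a ≠ b ∧ G.Adj a b ∧
  ∃ φ : ∀ i, Vf i → W,
    (∀ i, Function.Injective (φ i)) ∧
    (∀ x : W, ∃ i, x ∈ Set.range (φ i)) ∧
    (∀ i, Sym2.map (φ i) (es i) = s(a, b)) ∧
    (∀ i j, i ≠ j → Set.range (φ i) ∩ Set.range (φ j) = {a, b}) ∧
    ∀ x y : W, G.Adj x y ↔ ∃ i, ∃ u v, (Gs i).Adj u v ∧ φ i u = x ∧ φ i v = y

/-- `G'` together with the path `q` is the subdivision of `G` obtained by replacing the edge
`uv` by a path of `m` edges `q 0, …, q m` through new vertices. -/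
def IsSubdivisionAt {V W : Type*} (G : SimpleGraph V) (u v : V) {m : ℕ}
    (G' : SimpleGraph W) (q : Fin (m + 1) → W) : Prop :=
  ∃ φ : V → W, Function.Injective φ ∧ Function.Injective q ∧
    q 0 = φ u ∧ q (Fin.last m) = φ v ∧
    (∀ i : Fin (m + 1), i ≠ 0 → i ≠ Fin.last m → q i ∉ Set.range φ) ∧
    (∀ x : W, x ∈ Set.range φ ∨ x ∈ Set.range q) ∧
    ∀ x y : W, G'.Adj x y ↔
      ((∃ a b : V, G.Adj a b ∧ s(a, b) ≠ s(u, v) ∧ φ a = x ∧ φ b = y) ∨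
       ∃ i : Fin m, s(x, y) = s(q i.castSucc, q i.succ))

/-- `G` (with the distinguished nonadjacent pair `a b`) is the collision of `G₁` and `G₂` on
the edges `e₁, e₂`: the disjoint union with `e₁` and `e₂` identified and then deleted. -/
def IsCollision {V₁ V₂ W : Type*} (G₁ : SimpleGraph V₁) (G₂ : SimpleGraph V₂)
    (e₁ : Sym2 V₁) (e₂ : Sym2 V₂) (G : SimpleGraph W) (a b : W) : Prop :=
  a ≠ b ∧ ¬ G.Adj a b ∧
  ∃ (φ₁ : V₁ → W) (φ₂ : V₂ → W),
    Function.Injective φ₁ ∧ Function.Injective φ₂ ∧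
    Sym2.map φ₁ e₁ = s(a, b) ∧ Sym2.map φ₂ e₂ = s(a, b) ∧
    (∀ x : W, x ∈ Set.range φ₁ ∨ x ∈ Set.range φ₂) ∧
    Set.range φ₁ ∩ Set.range φ₂ = {a, b} ∧
    ∀ x y : W, G.Adj x y ↔
      ((∃ u v, G₁.Adj u v ∧ s(u, v) ≠ e₁ ∧ φ₁ u = x ∧ φ₁ v = y) ∨
       (∃ u v, G₂.Adj u v ∧ s(u, v) ≠ e₂ ∧ φ₂ u = x ∧ φ₂ v = y))

/-- The inner vertices of an ear. -/
def earInner {V : Type*} {s : ℕ} (p : Fin (s + 1) → V) : Set V :=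
  {x | ∃ i : Fin (s + 1), i ≠ 0 ∧ i ≠ Fin.last s ∧ p i = x}

/-- The edges of an ear. -/
def earEdges {V : Type*} {s : ℕ} (p : Fin (s + 1) → V) : Set (Sym2 V) :=
  {e | ∃ i : Fin s, e = s(p i.castSucc, p i.succ)}

/-- An `s`-ear of `G`: a path with `s` edges whose inner vertices have degree `2` in `G`. -/
def IsEar {V : Type*} (G : SimpleGraph V) {s : ℕ} (p : Fin (s + 1) → V) : Prop :=
  Function.Injective p ∧ (∀ i : Fin s, G.Adj (p i.castSucc) (p i.succ)) ∧
  ∀ i : Fin (s + 1), i ≠ 0 → i ≠ Fin.last s → (G.neighborSet (p i)).ncard = 2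

/-- `T` is the vertex set of an inclusion-maximal proper `2`-connected induced subgraph. -/
def IsMaxProperTwoConnected {V : Type*} (G : SimpleGraph V) (T : Set V) : Prop :=
  IsTwoConnected (G.induce T) ∧ T ≠ Set.univ ∧
  ∀ T' : Set V, T ⊆ T' → T' ≠ Set.univ → IsTwoConnected (G.induce T') → T' = T

/-! ### `(♠)₂` and `3`-connectivity -/

/-- A `2`-connected graph satisfies the equalities `(♠)₂`:
`|E| = 2(|V|-1)` and `|E(S)| = 2|S| - 3` for every good flat `S`. -/
def Spade2 {V : Type*} (G : SimpleGraph V) : Prop :=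
  IsTwoConnected G ∧ G.edgeSet.ncard = 2 * (Nat.card V - 1) ∧
  ∀ S : Set V, IsGoodFlat G S → (edgesIn G S).ncard = 2 * S.ncard - 3

/-- A graph is `3`-connected if it has more than `3` vertices and remains connected after
deletion of any two vertices. -/
def IsThreeConnected {V : Type*} (G : SimpleGraph V) : Prop :=
  3 < Nat.card V ∧ ∀ u v : V, (G.induce {x : V | x ≠ u ∧ x ≠ v}).Connected

/-! ### Inductive constructions -/

/-- Graphs obtainable from the `δ`-cycle by gluings (Proposition `construction1`) and
`(δ-1)`-subdivisions (Proposition `construction2`). -/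
inductive Obtainable (δ : ℕ) : {W : Type} → SimpleGraph W → Prop
  | cycle {W : Type} (G : SimpleGraph W) (e : G ≃g SimpleGraph.cycleGraph δ) :
      Obtainable δ G
  | glue {Vf : Fin (δ - 1) → Type} {W : Type}
      (Gs : ∀ i, SimpleGraph (Vf i)) (ws : ∀ i, Sym2 (Vf i) → ℕ) (es : ∀ i, Sym2 (Vf i))
      (G : SimpleGraph W) (a b : W)
      (hob : ∀ i, Obtainable δ (Gs i))
      (hsp : ∀ i, SatisfiesSpade (Gs i) δ (ws i))
      (hes : ∀ i, es i ∈ (Gs i).edgeSet)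
      (hwe : ∀ i, ws i (es i) = δ - 1)
      (hgl : IsGluing Gs es G a b) : Obtainable δ G
  | subdivide {V W : Type} (G : SimpleGraph V) (w : Sym2 V → ℕ) (u v : V)
      (G' : SimpleGraph W) (q : Fin (δ - 1 + 1) → W)
      (hob : Obtainable δ G) (hsp : SatisfiesSpade G δ w)
      (huv : G.Adj u v) (hw1 : w s(u, v) = 1)
      (hsub : IsSubdivisionAt G u v G' q) : Obtainable δ G'

/-- Graphs obtainable from the clique `K₄` by a finite sequence of collisions. -/
inductive ObtainableK4 : {W : Type} → SimpleGraph W → Prop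
  | k4 {W : Type} (G : SimpleGraph W) (e : G ≃g (⊤ : SimpleGraph (Fin 4))) :
      ObtainableK4 G
  | collide {V₁ V₂ W : Type} (G₁ : SimpleGraph V₁) (G₂ : SimpleGraph V₂)
      (e₁ : Sym2 V₁) (e₂ : Sym2 V₂) (G : SimpleGraph W) (a b : W)
      (h₁ : ObtainableK4 G₁) (h₂ : ObtainableK4 G₂)
      (he₁ : e₁ ∈ G₁.edgeSet) (he₂ : e₂ ∈ G₂.edgeSet)
      (hc : IsCollision G₁ G₂ e₁ e₂ G a b) : ObtainableK4 G



set_option linter.unusedSectionVars false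
set_option maxHeartbeats 1000000

section Infra
variable {W : Type*} {H : SimpleGraph W}

/-- Reachability within a vertex set, by a walk whose support stays in `A`. -/
def WReach (H : SimpleGraph W) (A : Set W) (x y : W) : Prop :=
  ∃ p : H.Walk x y, ∀ v ∈ p.support, v ∈ A

lemma WReach.mem_left {A : Set W} {x y : W} (h : WReach H A x y) : x ∈ A := by
  obtain ⟨p, hp⟩ := h; exact hp x p.start_mem_support

lemma WReach.mem_right {A : Set W} {x y : W} (h : WReach H A x y) : y ∈ A := by
  obtain ⟨p, hp⟩ := h; exact hp y p.end_mem_support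

lemma WReach.refl {A : Set W} {x : W} (hx : x ∈ A) : WReach H A x x :=
  ⟨.nil, by simp [hx]⟩

lemma WReach.symm {A : Set W} {x y : W} (h : WReach H A x y) : WReach H A y x := by
  obtain ⟨p, hp⟩ := h; exact ⟨p.reverse, by simpa using hp⟩

lemma WReach.trans {A : Set W} {x y z : W} (h : WReach H A x y) (h' : WReach H A y z) :
    WReach H A x z := by
  obtain ⟨p, hp⟩ := h; obtain ⟨q, hq⟩ := h'
  refine ⟨p.append q, fun v hv => ?_⟩
  rcases (SimpleGraph.Walk.mem_support_append_iff _ _).1 hv with h | h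
  · exact hp v h
  · exact hq v h

lemma WReach.mono {A B : Set W} (hAB : A ⊆ B) {x y : W} (h : WReach H A x y) :
    WReach H B x y := by
  obtain ⟨p, hp⟩ := h; exact ⟨p, fun v hv => hAB (hp v hv)⟩

lemma WReach.single {A : Set W} {x y : W} (hadj : H.Adj x y) (hx : x ∈ A) (hy : y ∈ A) :
    WReach H A x y := by
  refine ⟨SimpleGraph.Walk.cons hadj SimpleGraph.Walk.nil, ?_⟩
  intro v hv
  simp only [SimpleGraph.Walk.support_cons, SimpleGraph.Walk.support_nil,
    List.mem_cons, List.mem_singleton, List.not_mem_nil, or_false] at hv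
  rcases hv with rfl | rfl
  · exact hx
  · exact hy

/-- Set-level connectivity. -/
def Conn (H : SimpleGraph W) (A : Set W) : Prop :=
  A.Nonempty ∧ ∀ x ∈ A, ∀ y ∈ A, WReach H A x y

/-- Transfer a walk with support in `A` to a walk in the induced graph. -/
lemma walk_to_induce {A : Set W} : ∀ {x y : W} (p : H.Walk x y)
    (_ : ∀ v ∈ p.support, v ∈ A) (hx : x ∈ A) (hy : y ∈ A),
    (H.induce A).Reachable ⟨x, hx⟩ ⟨y, hy⟩ := by
  intro x y p
  induction p with
  | nil => intro _ hx hy; rfl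
  | @cons a b c hab p ih =>
    intro hp hx hy
    have hb : b ∈ A := hp b (by simp)
    have h1 : (H.induce A).Adj ⟨a, hx⟩ ⟨b, hb⟩ := hab
    exact (h1.reachable).trans (ih (fun v hv => hp v (by simp [hv])) hb hy)

lemma wreach_to_induce {A : Set W} {x y : W} (h : WReach H A x y)
    (hx : x ∈ A) (hy : y ∈ A) : (H.induce A).Reachable ⟨x, hx⟩ ⟨y, hy⟩ := by
  obtain ⟨p, hp⟩ := h
  exact walk_to_induce p hp hx hy

lemma induce_to_wreach {A : Set W} {x y : ↥A} (h : (H.induce A).Reachable x y) :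
    WReach H A x y := by
  obtain ⟨q⟩ := h
  refine ⟨q.map ⟨Subtype.val, fun hadj => hadj⟩, ?_⟩
  intro v hv
  rw [SimpleGraph.Walk.support_map] at hv
  obtain ⟨⟨u, hu⟩, _, rfl⟩ := List.mem_map.1 hv
  exact hu

lemma conn_iff_induce_connected {A : Set W} : Conn H A ↔ (H.induce A).Connected := by
  constructor
  · rintro ⟨⟨x0, hx0⟩, h⟩
    haveI : Nonempty ↥A := ⟨⟨x0, hx0⟩⟩
    refine ⟨fun x y => ?_⟩
    exact wreach_to_induce (h x x.2 y y.2) x.2 y.2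
  · intro hc
    obtain ⟨x0⟩ := hc.nonempty
    refine ⟨⟨x0, x0.2⟩, fun x hx y hy => ?_⟩
    exact induce_to_wreach (hc.preconnected ⟨x, hx⟩ ⟨y, hy⟩)

/-- Confinement: a walk starting in `C` either stays in `C` or exits through `T`. -/
lemma exit_or_confined {C T : Set W} (hC : ∀ u ∈ C, ∀ v, H.Adj u v → v ∈ C ∪ T) :
    ∀ {x y : W} (p : H.Walk x y), x ∈ C →
      (∀ v ∈ p.support, v ∈ C) ∨
        ∃ t ∈ T, ∃ q : H.Walk x t, (∀ v ∈ q.support, v ∈ p.support) ∧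
          ∀ v ∈ q.support, v = t ∨ v ∈ C := by
  intro x y p
  induction p with
  | nil =>
    intro hx; left; intro v hv
    simp only [SimpleGraph.Walk.support_nil, List.mem_singleton] at hv; subst hv; exact hx
  | @cons a b c hab p ih =>
    intro ha
    rcases hC a ha b hab with hb | hb
    · rcases ih hb with hconf | ⟨t, ht, q, hsub, hq⟩
      · left; intro v hv
        rw [SimpleGraph.Walk.support_cons, List.mem_cons] at hv
        rcases hv with rfl | hv
        · exact ha
        · exact hconf v hv
      · right
        refine ⟨t, ht, SimpleGraph.Walk.cons hab q, fun v hv => ?_, fun v hv => ?_⟩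
        · rw [SimpleGraph.Walk.support_cons, List.mem_cons] at hv
          rw [SimpleGraph.Walk.support_cons, List.mem_cons]
          rcases hv with rfl | hv
          · exact Or.inl rfl
          · exact Or.inr (hsub v hv)
        · rw [SimpleGraph.Walk.support_cons, List.mem_cons] at hv
          rcases hv with rfl | hv
          · exact Or.inr ha
          · exact hq v hv
    · right
      refine ⟨b, hb, SimpleGraph.Walk.cons hab SimpleGraph.Walk.nil,
        fun v hv => ?_, fun v hv => ?_⟩
      · simp only [SimpleGraph.Walk.support_cons, SimpleGraph.Walk.support_nil,
          List.mem_cons, List.mem_singleton, List.not_mem_nil, or_false] at hv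
        rw [SimpleGraph.Walk.support_cons, List.mem_cons]
        rcases hv with rfl | rfl
        · exact Or.inl rfl
        · exact Or.inr p.start_mem_support
      · simp only [SimpleGraph.Walk.support_cons, SimpleGraph.Walk.support_nil,
          List.mem_cons, List.mem_singleton, List.not_mem_nil, or_false] at hv
        rcases hv with rfl | rfl
        · exact Or.inr ha
        · exact Or.inl rfl

lemma reach_exit {C T : Set W} (hC : ∀ u ∈ C, ∀ v, H.Adj u v → v ∈ C ∪ T)
    {x y : W} (p : H.Walk x y) (hx : x ∈ C) (hy : y ∉ C) :
    ∃ t ∈ T, ∃ q : H.Walk x t, (∀ v ∈ q.support, v ∈ p.support) ∧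
      ∀ v ∈ q.support, v = t ∨ v ∈ C := by
  rcases exit_or_confined hC p hx with h | h
  · exact absurd (h y p.end_mem_support) hy
  · exact h

lemma exit_adj {C : Set W} {x t : W} (q : H.Walk x t)
    (hq : ∀ v ∈ q.support, v = t ∨ v ∈ C) (ht : t ∉ C) (hx : x ∈ C) :
    ∃ u ∈ C, H.Adj u t := by
  cases hq2 : q.reverse with
  | nil => exact absurd hx ht
  | @cons a b c hadj q' =>
    refine ⟨b, ?_, hadj.symm⟩
    have hb : b ∈ q.reverse.support := by rw [hq2]; simp
    rw [SimpleGraph.Walk.support_reverse, List.mem_reverse] at hb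
    rcases hq b hb with rfl | hmem
    · exact absurd rfl hadj.ne
    · exact hmem

/-- Connectivity of a union via a hub. -/
lemma conn_of_hub {A : Set W} {a : W} (ha : a ∈ A) (h : ∀ x ∈ A, WReach H A x a) :
    Conn H A :=
  ⟨⟨a, ha⟩, fun x hx y hy => (h x hx).trans (h y hy).symm⟩

lemma Conn.insert {A : Set W} {x y : W} (hA : Conn H A) (hy : y ∈ A) (hxy : H.Adj x y) :
    Conn H (insert x A) := by
  refine conn_of_hub (a := y) (Set.mem_insert_of_mem _ hy) ?_
  rintro z hz
  rcases Set.mem_insert_iff.1 hz with rfl | hz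
  · exact WReach.single hxy (Set.mem_insert _ _) (Set.mem_insert_of_mem _ hy)
  · exact (hA.2 z hz y hy).mono (Set.subset_insert _ _)

lemma Conn.union {A B : Set W} (hA : Conn H A) (hB : Conn H B) {x y : W}
    (hx : x ∈ A) (hy : y ∈ B) (hxy : H.Adj x y) : Conn H (A ∪ B) := by
  refine conn_of_hub (a := x) (Or.inl hx) ?_
  rintro z (hz | hz)
  · exact (hA.2 z hz x hx).mono Set.subset_union_left
  · exact ((hB.2 z hz y hy).mono Set.subset_union_right).trans
      (WReach.single hxy (Set.mem_union_left _ hx) (Set.mem_union_right _ hy)).symm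

/-- Set-level 2-connectivity. -/
def TwoConnSet (H : SimpleGraph W) (S : Set W) : Prop :=
  Conn H S ∧ ∀ u ∈ S, Conn H (S \ {u})

lemma isTwoConnected_induce_iff {S : Set W} :
    IsTwoConnected (H.induce S) ↔ TwoConnSet H S := by
  have key : ∀ (u : ↥S), ((H.induce S).induce {w : ↥S | w ≠ u}).Connected ↔
      (H.induce (S \ {(u : W)})).Connected := by
    intro u
    have e : (H.induce S).induce {w : ↥S | w ≠ u} ≃g H.induce (S \ {(u : W)}) :=
      ⟨⟨fun w => ⟨w.1.1, w.1.2, fun hh => w.2 (Subtype.ext hh)⟩,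
        fun w => ⟨⟨w.1, w.2.1⟩, fun hh => w.2.2 (congrArg Subtype.val hh)⟩,
        fun w => rfl, fun w => rfl⟩, Iff.rfl⟩
    exact e.connected_iff
  constructor
  · rintro ⟨h1, h2⟩
    refine ⟨conn_iff_induce_connected.2 h1, fun u hu => ?_⟩
    exact conn_iff_induce_connected.2 ((key ⟨u, hu⟩).1 (h2 ⟨u, hu⟩))
  · rintro ⟨h1, h2⟩
    refine ⟨conn_iff_induce_connected.1 h1, fun u => ?_⟩
    exact (key u).2 (conn_iff_induce_connected.1 (h2 u.1 u.2))

end Infra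

section Comp
variable {V : Type*} {G : SimpleGraph V}

/-- `Hs` is (the vertex set of) a connected component of `G.induce D`. -/
def IsCompIn (G : SimpleGraph V) (D Hs : Set V) : Prop :=
  Hs.Nonempty ∧ Hs ⊆ D ∧ Conn G Hs ∧ ∀ u ∈ Hs, ∀ v, G.Adj u v → v ∈ D → v ∈ Hs

/-- The vertex set of the connected component of `x` in `G.induce D`. -/
def compSet (G : SimpleGraph V) (D : Set V) (x : ↥D) : Set V :=
  Subtype.val '' ((G.induce D).connectedComponentMk x).supp

lemma mem_compSet {D : Set V} {x : ↥D} {y : V} :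
    y ∈ compSet G D x ↔ ∃ hy : y ∈ D, (G.induce D).Reachable ⟨y, hy⟩ x := by
  constructor
  · rintro ⟨⟨y', hy'⟩, hmem, rfl⟩
    exact ⟨hy', ConnectedComponent.exact hmem⟩
  · rintro ⟨hy, hr⟩
    exact ⟨⟨y, hy⟩, ConnectedComponent.sound hr, rfl⟩

lemma self_mem_compSet {D : Set V} {x : ↥D} : (x : V) ∈ compSet G D x :=
  mem_compSet.2 ⟨x.2, by rfl⟩

lemma compSet_subset {D : Set V} {x : ↥D} : compSet G D x ⊆ D := by
  rintro y ⟨⟨y', hy'⟩, _, rfl⟩; exact hy'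

lemma compSet_eq_of_mem {D : Set V} {x y : ↥D} (h : (y : V) ∈ compSet G D x) :
    compSet G D y = compSet G D x := by
  obtain ⟨hy, hr⟩ := mem_compSet.1 h
  have h2 : (G.induce D).connectedComponentMk y = (G.induce D).connectedComponentMk x :=
    ConnectedComponent.sound hr
  unfold compSet
  rw [h2]

lemma isCompIn_compSet {D : Set V} (x : ↥D) : IsCompIn G D (compSet G D x) := by
  refine ⟨⟨x, self_mem_compSet⟩, compSet_subset, ⟨⟨x, self_mem_compSet⟩, ?_⟩, ?_⟩
  · rintro y hy z hz
    obtain ⟨hyD, hry⟩ := mem_compSet.1 hy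
    obtain ⟨hzD, hrz⟩ := mem_compSet.1 hz
    obtain ⟨p⟩ := hry.trans hrz.symm
    refine ⟨p.map ⟨Subtype.val, fun hadj => hadj⟩, ?_⟩
    intro v hv
    rw [SimpleGraph.Walk.support_map] at hv
    obtain ⟨⟨u, hu⟩, humem, rfl⟩ := List.mem_map.1 hv
    obtain ⟨q, r, rfl⟩ := SimpleGraph.Walk.mem_support_iff_exists_append.1 humem
    exact mem_compSet.2 ⟨hu, (ConnectedComponent.exact (ConnectedComponent.sound ⟨q⟩)).symm.trans hry⟩
  · intro u hu v hadj hvD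
    obtain ⟨huD, hru⟩ := mem_compSet.1 hu
    have : (G.induce D).Adj ⟨v, hvD⟩ ⟨u, huD⟩ := hadj.symm
    exact mem_compSet.2 ⟨hvD, this.reachable.trans hru⟩

lemma IsCompIn.eq_compSet {D Hs : Set V} (hH : IsCompIn G D Hs) {x : ↥D}
    (hx : (x : V) ∈ Hs) : Hs = compSet G D x := by
  apply Set.Subset.antisymm
  · intro y hy
    obtain ⟨p, hp⟩ := hH.2.2.1.2 y hy x hx
    exact mem_compSet.2 ⟨hH.2.1 hy, walk_to_induce p (fun v hv => hH.2.1 (hp v hv)) (hH.2.1 hy) x.2⟩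
  · intro z hz
    obtain ⟨hzD, hr⟩ := mem_compSet.1 hz
    obtain ⟨p, hp⟩ := induce_to_wreach hr.symm
    have hC : ∀ u ∈ Hs, ∀ v, G.Adj u v → v ∈ Hs ∪ Dᶜ := by
      intro u hu v hadj
      by_cases hvD : v ∈ D
      · exact Or.inl (hH.2.2.2 u hu v hadj hvD)
      · exact Or.inr hvD
    rcases exit_or_confined hC p hx with hconf | ⟨t, ht, q, hsub, _⟩
    · exact hconf z p.end_mem_support
    · exact absurd (hp t (hsub t q.end_mem_support)) ht

lemma IsCompIn.disjoint_or_eq {D H1 H2 : Set V} (h1 : IsCompIn G D H1)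
    (h2 : IsCompIn G D H2) : H1 = H2 ∨ Disjoint H1 H2 := by
  by_cases h : Disjoint H1 H2
  · exact Or.inr h
  · left
    obtain ⟨z, hz1, hz2⟩ := Set.not_disjoint_iff.1 h
    have hzD : z ∈ D := h1.2.1 hz1
    rw [h1.eq_compSet (x := ⟨z, hzD⟩) hz1, h2.eq_compSet (x := ⟨z, hzD⟩) hz2]

end Comp

section Contract
variable {V : Type*} {G : SimpleGraph V} {S : Set V}

private abbrev Gam (G : SimpleGraph V) (S : Set V) := SimpleGraph.fromEdgeSet (edgesIn G S)

lemma gam_adj {u v : V} (h : (Gam G S).Adj u v) : u ∈ S ∧ v ∈ S ∧ G.Adj u v := by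
  rw [SimpleGraph.fromEdgeSet_adj] at h
  obtain ⟨⟨he, hmem⟩, _⟩ := h
  exact ⟨hmem u (Sym2.mem_mk_left u v), hmem v (Sym2.mem_mk_right u v), he⟩

lemma mk_eq_of_wreach {x y : V} (h : WReach G S x y) :
    (Gam G S).connectedComponentMk x = (Gam G S).connectedComponentMk y := by
  obtain ⟨p, hp⟩ := h
  apply ConnectedComponent.sound
  induction p with
  | nil => rfl
  | @cons a b c hab p ih =>
    have hadj : (Gam G S).Adj a b := by
      rw [SimpleGraph.fromEdgeSet_adj]
      refine ⟨⟨hab, ?_⟩, hab.ne⟩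
      intro w hw
      rcases Sym2.mem_iff.1 hw with rfl | rfl
      · exact hp w (by simp)
      · exact hp w (by simp)
    exact hadj.reachable.trans (ih (fun v hv => hp v (by simp [hv])))

lemma eq_of_mk_eq_not_mem {x y : V} (hx : x ∉ S)
    (h : (Gam G S).connectedComponentMk y = (Gam G S).connectedComponentMk x) : y = x := by
  obtain ⟨p⟩ := (ConnectedComponent.exact h).symm
  cases p with
  | nil => rfl
  | cons hadj _ => exact absurd (gam_adj hadj).1 hx

lemma contract_adj_of {u v : V} (h : G.Adj u v)
    (hne : (Gam G S).connectedComponentMk u ≠ (Gam G S).connectedComponentMk v) :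
    (contractEdges G (edgesIn G S)).Adj ((Gam G S).connectedComponentMk u)
      ((Gam G S).connectedComponentMk v) := by
  rw [contractEdges, SimpleGraph.fromRel_adj]
  exact ⟨hne, Or.inl ⟨u, v, h, rfl, rfl⟩⟩

/-- Lift a `G`-walk to a walk in the contraction. -/
lemma lift_walk {A : Set (Gam G S).ConnectedComponent} :
    ∀ {x y : V} (p : G.Walk x y)
      (_ : ∀ v ∈ p.support, (Gam G S).connectedComponentMk v ∈ A),
      WReach (contractEdges G (edgesIn G S)) A
        ((Gam G S).connectedComponentMk x) ((Gam G S).connectedComponentMk y) := by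
  intro x y p
  induction p with
  | nil => intro hA; exact WReach.refl (hA _ (by simp))
  | @cons a b c hab p ih =>
    intro hA
    have hb := ih (fun v hv => hA v (by simp [hv]))
    by_cases he : (Gam G S).connectedComponentMk a = (Gam G S).connectedComponentMk b
    · rw [he]; exact hb
    · obtain ⟨q, hq⟩ := hb
      exact ⟨SimpleGraph.Walk.cons (contract_adj_of hab he) q, by
        intro v hv
        rw [SimpleGraph.Walk.support_cons, List.mem_cons] at hv
        rcases hv with rfl | hv
        · exact hA _ (by simp)
        · exact hq v hv⟩

theorem isTwoConnected_contract (hpre : G.Preconnected) (hS : Conn G S) (hcompl : Conn G Sᶜ)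
    (hreach : ∀ x ∈ Sᶜ, ∀ y ∈ Sᶜ, y ≠ x →
      ∃ t ∈ S, WReach G ((Sᶜ \ {x}) ∪ {t}) y t) :
    IsTwoConnected (contractEdges G (edgesIn G S)) := by
  classical
  obtain ⟨s0, hs0⟩ := hS.1
  set mk := (Gam G S).connectedComponentMk with hmk
  have hSc : ∀ x ∈ S, mk x = mk s0 := fun x hx => mk_eq_of_wreach (hS.2 x hx s0 hs0)
  have hmkS : ∀ {x : V}, x ∉ S → mk x ≠ mk s0 := by
    intro x hx h
    exact hx ((eq_of_mk_eq_not_mem (x := x) hx h.symm ▸ hs0 : x ∈ S))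
  have hmkne : ∀ {x y : V}, x ∉ S → y ≠ x → mk y ≠ mk x := by
    intro x y hx hyx h
    exact hyx (eq_of_mk_eq_not_mem hx h)
  constructor
  · haveI : Nonempty ((Gam G S).ConnectedComponent) := ⟨mk s0⟩
    refine ⟨fun c d => ?_⟩
    obtain ⟨x, rfl⟩ := c.exists_rep
    obtain ⟨y, rfl⟩ := d.exists_rep
    obtain ⟨w⟩ := hpre x y
    obtain ⟨q, _⟩ := lift_walk w (A := Set.univ) (fun v _ => Set.mem_univ _)
    exact ⟨q⟩
  · intro vq
    obtain ⟨z, rfl⟩ := vq.exists_rep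
    have : Conn (contractEdges G (edgesIn G S)) {u | u ≠ mk z} := by
      by_cases hz : z ∈ S
      · -- deleting the contracted class
        have hzS : mk z = mk s0 := hSc z hz
        obtain ⟨z0, hz0⟩ := hcompl.1
        have hz0m : mk z0 ≠ mk z := by rw [hzS]; exact hmkS hz0
        refine conn_of_hub (a := mk z0) hz0m ?_
        rintro c hc
        obtain ⟨y, rfl⟩ := c.exists_rep
        have hy : y ∉ S := by
          intro hyS
          exact hc ((hSc y hyS).trans hzS.symm)
        obtain ⟨p, hp⟩ := hcompl.2 y hy z0 hz0
        exact lift_walk p (fun v hv => by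
          have : mk v ≠ mk z := by rw [hzS]; exact hmkS (hp v hv)
          exact this)
      · -- deleting a singleton class
        have hcS : mk s0 ≠ mk z := by
          intro h
          have h2 : s0 = z := eq_of_mk_eq_not_mem hz h
          exact hz (h2 ▸ hs0)
        refine conn_of_hub (a := mk s0) hcS ?_
        rintro c hc
        obtain ⟨y, rfl⟩ := c.exists_rep
        by_cases hy : y ∈ S
        · show WReach (contractEdges G (edgesIn G S)) {u | u ≠ mk z} (mk y) (mk s0)
          rw [hSc y hy]; exact WReach.refl hcS
        · have hyz : y ≠ z := fun h => hc (congrArg mk h)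
          obtain ⟨t, htS, hw⟩ := hreach z hz y hy hyz
          obtain ⟨p, hp⟩ := hw
          have hlift := lift_walk p (A := {u | u ≠ mk z}) (fun v hv => by
            rcases hp v hv with hv' | hv'
            · exact hmkne hz (fun hh => hv'.2 hh)
            · have hvt : v = t := hv'
              subst hvt
              have h5 : mk v ≠ mk z := by rw [hSc v htS]; exact hcS
              exact h5)
          show WReach (contractEdges G (edgesIn G S)) {u | u ≠ mk z} (mk y) (mk s0)
          rw [← hSc t htS]
          exact hlift
    rw [conn_iff_induce_connected] at this
    exact this

end Contract

section Main
variable {V : Type*} [Fintype V] [DecidableEq V] {G : SimpleGraph V}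

def Kset (a b : V) : Set V := {x | x ≠ a ∧ x ≠ b}

lemma Kset_comm {a b : V} : Kset a b = Kset b a := by
  ext x; exact and_comm

lemma mem_Kset {a b x : V} : x ∈ Kset a b ↔ x ≠ a ∧ x ≠ b := Iff.rfl

lemma not_mem_Kset_left {a b : V} : a ∉ Kset a b := fun h => h.1 rfl
lemma not_mem_Kset_right {a b : V} : b ∉ Kset a b := fun h => h.2 rfl

lemma compl_Kset {a b : V} : (Kset a b)ᶜ = {a, b} := by
  ext x
  by_cases hxa : x = a <;> by_cases hxb : x = b <;>
    simp [Kset, hxa, hxb]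

lemma not_mem_Kset_iff {a b x : V} : x ∉ Kset a b ↔ x = a ∨ x = b := by
  rw [← Set.mem_compl_iff, compl_Kset]; rfl

lemma IsCompIn.pairClosure {a b : V} {Hs : Set V} (hH : IsCompIn G (Kset a b) Hs) :
    ∀ u ∈ Hs, ∀ v, G.Adj u v → v ∈ Hs ∪ {a, b} := by
  intro u hu v hadj
  by_cases hv : v ∈ Kset a b
  · exact Or.inl (hH.2.2.2 u hu v hadj hv)
  · exact Or.inr (not_mem_Kset_iff.1 hv)

lemma IsCompIn.swap {a b : V} {Hs : Set V} (hH : IsCompIn G (Kset a b) Hs) :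
    IsCompIn G (Kset b a) Hs := by rwa [Kset_comm] at hH

lemma comp_nbr (h2c : IsTwoConnected G) {a b : V} (hab : a ≠ b) {Hs : Set V}
    (hH : IsCompIn G (Kset a b) Hs) : ∃ x ∈ Hs, G.Adj a x := by
  obtain ⟨h0, hh0⟩ := hH.1
  have hh0K := hH.2.1 hh0
  have hr : (G.induce {u | u ≠ b}).Reachable ⟨h0, hh0K.2⟩ ⟨a, hab⟩ :=
    (h2c.2 b).preconnected _ _
  obtain ⟨p, hp⟩ := induce_to_wreach hr
  have haHs : a ∉ Hs := fun h => (hH.2.1 h).1 rfl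
  obtain ⟨t, ht, q, hsub, hq⟩ := reach_exit hH.pairClosure p hh0 haHs
  have hta : t = a := by
    rcases ht with rfl | rfl
    · rfl
    · exact absurd rfl (hp t (hsub t q.end_mem_support))
  subst hta
  obtain ⟨u, hu, hadj⟩ := exit_adj q hq haHs hh0
  exact ⟨u, hu, hadj.symm⟩

lemma comp_nbr_b (h2c : IsTwoConnected G) {a b : V} (hab : a ≠ b) {Hs : Set V}
    (hH : IsCompIn G (Kset a b) Hs) : ∃ x ∈ Hs, G.Adj b x :=
  comp_nbr h2c hab.symm hH.swap

lemma union_pair_eq {a b : V} {Hs : Set V} :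
    Hs ∪ {a, b} = insert a (insert b Hs) := by
  ext z; simp only [Set.mem_union, Set.mem_insert_iff, Set.mem_singleton_iff]; tauto

lemma conn_side (h2c : IsTwoConnected G) {a b : V} (hab : a ≠ b) {Hs : Set V}
    (hH : IsCompIn G (Kset a b) Hs) : Conn G (Hs ∪ {a, b}) := by
  obtain ⟨x, hx, hax⟩ := comp_nbr h2c hab hH
  obtain ⟨y, hy, hby⟩ := comp_nbr_b h2c hab hH
  have h1 : Conn G (insert b Hs) := hH.2.2.1.insert hy hby
  have h2 : Conn G (insert a (insert b Hs)) :=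
    h1.insert (Set.mem_insert_of_mem _ hx) hax
  rwa [union_pair_eq]

lemma wreach_to_a (h2c : IsTwoConnected G) {a b : V} (hab : a ≠ b) {Hs : Set V}
    (hH : IsCompIn G (Kset a b) Hs) : ∀ y ∈ Hs, WReach G (Hs ∪ {a}) y a := by
  obtain ⟨x, hx, hax⟩ := comp_nbr h2c hab hH
  intro y hy
  exact ((hH.2.2.1.2 y hy x hx).mono Set.subset_union_left).trans
    (WReach.single hax.symm (Set.mem_union_left _ hx) (Set.mem_union_right _ rfl))

lemma wreach_to_b (h2c : IsTwoConnected G) {a b : V} (hab : a ≠ b) {Hs : Set V}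
    (hH : IsCompIn G (Kset a b) Hs) : ∀ y ∈ Hs, WReach G (Hs ∪ {b}) y b :=
  wreach_to_a h2c hab.symm hH.swap

lemma wreach_b_a (h2c : IsTwoConnected G) {a b : V} (hab : a ≠ b) {Hs : Set V}
    (hH : IsCompIn G (Kset a b) Hs) : WReach G (Hs ∪ {a, b}) b a := by
  obtain ⟨y, hy, hby⟩ := comp_nbr_b h2c hab hH
  have h1 : WReach G (Hs ∪ {a, b}) b y :=
    WReach.single hby (Set.mem_union_right _ (Or.inr rfl)) (Set.mem_union_left _ hy)
  have h2 : WReach G (Hs ∪ {a}) y a := wreach_to_a h2c hab hH y hy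
  exact h1.trans (h2.mono (Set.union_subset_union_right Hs (by rintro z rfl; exact Or.inl rfl)))

lemma reach_exit_avoid (h2c : IsTwoConnected G) {a b : V} (hab : a ≠ b) {Hs : Set V}
    (hH : IsCompIn G (Kset a b) Hs) {u x : V} (hx : x ∈ Hs) (hxu : x ≠ u) (hau : a ≠ u) :
    ∃ t, (t = a ∨ t = b) ∧ WReach G ((Hs \ {u}) ∪ {t}) x t ∧ t ≠ u := by
  have hr : (G.induce {w | w ≠ u}).Reachable ⟨x, hxu⟩ ⟨a, hau⟩ :=
    (h2c.2 u).preconnected _ _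
  obtain ⟨p, hp⟩ := induce_to_wreach hr
  have haHs : a ∉ Hs := fun h => (hH.2.1 h).1 rfl
  obtain ⟨t, ht, q, hsub, hq⟩ := reach_exit hH.pairClosure p hx haHs
  have htu : t ≠ u := hp t (hsub t q.end_mem_support)
  have htHs : t ∉ Hs := by
    rcases ht with rfl | rfl
    · exact haHs
    · exact fun h => (hH.2.1 h).2 rfl
  refine ⟨t, ?_, ⟨q, fun v hv => ?_⟩, htu⟩
  · rcases ht with rfl | rfl
    · exact Or.inl rfl
    · exact Or.inr rfl
  · rcases hq v hv with rfl | hvHs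
    · exact Set.mem_union_right _ rfl
    · exact Set.mem_union_left _ ⟨hvHs, hp v (hsub v hv)⟩

/-! ### Components of `G` minus a pair, as sets -/

def Hc {a b : V} (c : (G.induce (Kset a b)).ConnectedComponent) : Set V :=
  Subtype.val '' c.supp

lemma Hc_eq_compSet {a b : V} (c : (G.induce (Kset a b)).ConnectedComponent) :
    ∃ x : ↥(Kset a b), Hc (G := G) c = compSet G (Kset a b) x := by
  obtain ⟨x, hx⟩ := c.exists_rep
  refine ⟨x, ?_⟩
  show Subtype.val '' c.supp = _
  rw [← hx]
  rfl

lemma isCompIn_Hc {a b : V} (c : (G.induce (Kset a b)).ConnectedComponent) :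
    IsCompIn G (Kset a b) (Hc (G := G) c) := by
  obtain ⟨x, hx⟩ := Hc_eq_compSet (G := G) c
  rw [hx]; exact isCompIn_compSet x

lemma Hc_disjoint {a b : V} {c c' : (G.induce (Kset a b)).ConnectedComponent}
    (h : c ≠ c') : Disjoint (Hc (G := G) c) (Hc (G := G) c') := by
  rcases (isCompIn_Hc (G := G) c).disjoint_or_eq (isCompIn_Hc (G := G) c') with heq | hd
  · exfalso
    apply h
    have := heq
    unfold Hc at this
    exact SimpleGraph.ConnectedComponent.supp_injective
      (Set.image_injective.2 Subtype.val_injective this)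
  · exact hd

lemma mem_Hc_mk {a b x : V} (hx : x ∈ Kset a b) :
    x ∈ Hc (G := G) ((G.induce (Kset a b)).connectedComponentMk ⟨x, hx⟩) :=
  ⟨⟨x, hx⟩, rfl, rfl⟩

lemma Hc_subset {a b : V} (c : (G.induce (Kset a b)).ConnectedComponent) :
    Hc (G := G) c ⊆ Kset a b := (isCompIn_Hc c).2.1

lemma mem_Hc_iff_mk {a b x : V} (hx : x ∈ Kset a b)
    {c : (G.induce (Kset a b)).ConnectedComponent} :
    x ∈ Hc (G := G) c ↔ (G.induce (Kset a b)).connectedComponentMk ⟨x, hx⟩ = c := by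
  constructor
  · rintro ⟨⟨y, hy⟩, hmem, h⟩
    cases h
    exact hmem
  · rintro rfl
    exact mem_Hc_mk hx

/-- The complement of a single component is a good flat, provided there are at least
three components. -/
lemma isGoodFlat_compl_Hc (h2c : IsTwoConnected G) {a b : V} (hab : a ≠ b)
    (hthird : ∀ c1 c2 : (G.induce (Kset a b)).ConnectedComponent,
      ∃ c3, c3 ≠ c1 ∧ c3 ≠ c2)
    (c : (G.induce (Kset a b)).ConnectedComponent) :
    IsGoodFlat G (Hc (G := G) c)ᶜ := by
  set Sc := (Hc (G := G) c)ᶜ with hScdef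
  have haSc : a ∈ Sc := fun h => (Hc_subset c h).1 rfl
  have hbSc : b ∈ Sc := fun h => (Hc_subset c h).2 rfl
  have hsub : ∀ {c' : (G.induce (Kset a b)).ConnectedComponent}, c' ≠ c →
      Hc (G := G) c' ⊆ Sc := by
    intro c' hne
    exact fun y hy h => Set.disjoint_left.1 (Hc_disjoint hne) hy h
  have hcases : ∀ y ∈ Sc, y = a ∨ y = b ∨
      ∃ (hy : y ∈ Kset a b), (G.induce (Kset a b)).connectedComponentMk ⟨y, hy⟩ ≠ c := by
    intro y hy
    by_cases hya : y = a
    · exact Or.inl hya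
    by_cases hyb : y = b
    · exact Or.inr (Or.inl hyb)
    have hyK : y ∈ Kset a b := ⟨hya, hyb⟩
    refine Or.inr (Or.inr ⟨hyK, fun h => ?_⟩)
    exact hy (h ▸ mem_Hc_mk hyK)
  -- connectivity of the complement
  have hconn : Conn G Sc := by
    refine conn_of_hub haSc ?_
    intro y hy
    rcases hcases y hy with rfl | rfl | ⟨hyK, hne⟩
    · exact WReach.refl haSc
    · obtain ⟨c', hc1, _⟩ := hthird c c
      exact (wreach_b_a h2c hab (isCompIn_Hc c')).mono
        (Set.union_subset (hsub hc1) (by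
          intro z hz; rcases hz with rfl | rfl
          · exact haSc
          · exact hbSc))
    · exact ((wreach_to_a h2c hab (isCompIn_Hc _)) y (mem_Hc_mk hyK)).mono
        (Set.union_subset (hsub hne) (by rintro z rfl; exact haSc))
  -- 2-connectivity of the complement
  have htc : TwoConnSet G Sc := by
    refine ⟨hconn, fun u hu => ?_⟩
    rcases hcases u hu with rfl | rfl | ⟨huK, hcu⟩
    · -- delete a, hub b
      refine conn_of_hub (a := b) ⟨hbSc, hab.symm⟩ ?_
      intro y hy
      rcases hcases y hy.1 with rfl | rfl | ⟨hyK, hne⟩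
      · exact absurd rfl hy.2
      · exact WReach.refl ⟨hbSc, hab.symm⟩
      · refine ((wreach_to_b h2c hab (isCompIn_Hc _)) y (mem_Hc_mk hyK)).mono ?_
        refine Set.union_subset ?_ (by rintro z rfl; exact ⟨hbSc, hab.symm⟩)
        intro z hz
        exact ⟨hsub hne hz, (Hc_subset _ hz).1⟩
    · -- delete b, hub a
      refine conn_of_hub (a := a) ⟨haSc, hab⟩ ?_
      intro y hy
      rcases hcases y hy.1 with rfl | rfl | ⟨hyK, hne⟩
      · exact WReach.refl ⟨haSc, hab⟩
      · exact absurd rfl hy.2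
      · refine ((wreach_to_a h2c hab (isCompIn_Hc _)) y (mem_Hc_mk hyK)).mono ?_
        refine Set.union_subset ?_ (by rintro z rfl; exact ⟨haSc, hab⟩)
        intro z hz
        exact ⟨hsub hne hz, (Hc_subset _ hz).2⟩
    · -- delete u inside some other component, hub a
      set cu := (G.induce (Kset a b)).connectedComponentMk ⟨u, huK⟩ with hcudef
      obtain ⟨c3, hc3c, hc3cu⟩ := hthird c cu
      have hau : a ≠ u := fun h => huK.1 h.symm
      have hbu : b ≠ u := fun h => huK.2 h.symm
      have hba : WReach G (Sc \ {u}) b a := by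
        refine (wreach_b_a h2c hab (isCompIn_Hc c3)).mono ?_
        intro z hz
        rcases hz with hz | hz
        · refine ⟨hsub hc3c hz, ?_⟩
          intro h
          cases h
          exact hc3cu ((mem_Hc_iff_mk huK).1 hz).symm
        · rcases hz with rfl | rfl
          · exact ⟨haSc, hau⟩
          · exact ⟨hbSc, hbu⟩
      refine conn_of_hub (a := a) ⟨haSc, hau⟩ ?_
      intro y hy
      rcases hcases y hy.1 with rfl | rfl | ⟨hyK, hne⟩
      · exact WReach.refl ⟨haSc, hau⟩
      · exact hba
      · have hyu : y ≠ u := hy.2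
        obtain ⟨t, hta, hw, htu⟩ :=
          reach_exit_avoid h2c hab (isCompIn_Hc _) (mem_Hc_mk hyK) hyu hau
        have hw2 : WReach G (Sc \ {u}) y t := by
          refine hw.mono ?_
          intro z hz
          rcases hz with ⟨hz1, hz2⟩ | hz
          · exact ⟨hsub hne hz1, hz2⟩
          · cases hz
            rcases hta with rfl | rfl
            · exact ⟨haSc, htu⟩
            · exact ⟨hbSc, htu⟩
        rcases hta with rfl | rfl
        · exact hw2
        · exact hw2.trans hba
  constructor
  · exact isTwoConnected_induce_iff.2 htc
  · have hScc : Scᶜ = Hc (G := G) c := compl_compl _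
    refine isTwoConnected_contract h2c.1.preconnected htc.1 ?_ ?_
    · rw [hScc]; exact (isCompIn_Hc c).2.2.1
    · intro x hx y hy hyx
      rw [hScc] at hx hy
      have hax : a ≠ x := fun h => (Hc_subset c hx).1 h.symm
      obtain ⟨t, hta, hw, htx⟩ :=
        reach_exit_avoid h2c hab (isCompIn_Hc c) hy hyx hax
      refine ⟨t, ?_, ?_⟩
      · rcases hta with rfl | rfl
        · exact haSc
        · exact hbSc
      · rw [hScc]; exact hw

/-- An edge of `G` that meets `Hc c` and `Hc c'` forces `c = c'`. -/
lemma edge_touch_unique {a b : V} {c c' : (G.induce (Kset a b)).ConnectedComponent}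
    {e : Sym2 V} (he : e ∈ G.edgeSet) {x y : V} (hxe : x ∈ e) (hye : y ∈ e)
    (hx : x ∈ Hc (G := G) c) (hy : y ∈ Hc (G := G) c') : c = c' := by
  by_cases hxy : x = y
  · subst hxy
    have hxK := Hc_subset c hx
    exact ((mem_Hc_iff_mk hxK).1 hx).symm.trans ((mem_Hc_iff_mk hxK).1 hy)
  · induction e with
    | _ p q =>
      rw [SimpleGraph.mem_edgeSet] at he
      have hadj : G.Adj x y := by
        rcases Sym2.mem_iff.1 hxe with rfl | rfl <;> rcases Sym2.mem_iff.1 hye with rfl | rfl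
        · exact absurd rfl hxy
        · exact he
        · exact he.symm
        · exact absurd rfl hxy
      have hyK := Hc_subset c' hy
      have hyHc : y ∈ Hc (G := G) c := (isCompIn_Hc c).2.2.2 x hx y hadj hyK
      rw [← (mem_Hc_iff_mk hyK).1 hyHc, (mem_Hc_iff_mk hyK).1 hy]

lemma at_most_two (h2c : IsTwoConnected G) (hE : G.edgeSet.ncard = 2 * (Nat.card V - 1))
    (hSf : ∀ S : Set V, IsGoodFlat G S → (edgesIn G S).ncard = 2 * S.ncard - 3)
    {a b : V} (hab : a ≠ b) (c₁ c₂ c₃ : (G.induce (Kset a b)).ConnectedComponent) :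
    c₁ = c₂ ∨ c₁ = c₃ ∨ c₂ = c₃ := by
  classical
  by_contra hcon
  push_neg at hcon
  obtain ⟨h12, h13, h23⟩ := hcon
  haveI : Fintype ((G.induce (Kset a b)).ConnectedComponent) := Fintype.ofFinite _
  set n := Fintype.card ((G.induce (Kset a b)).ConnectedComponent) with hn
  have hn3 : 3 ≤ n := by
    have hcard : ({c₁, c₂, c₃} : Finset ((G.induce (Kset a b)).ConnectedComponent)).card = 3 := by
      rw [Finset.card_insert_of_notMem (by simp [h12, h13]),
        Finset.card_insert_of_notMem (by simp [h23]), Finset.card_singleton]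
    calc 3 = _ := hcard.symm
    _ ≤ n := Finset.card_le_card (Finset.subset_univ _) |>.trans_eq (by rw [hn, Finset.card_univ])
  have hthird : ∀ cA cB : (G.induce (Kset a b)).ConnectedComponent, ∃ cC, cC ≠ cA ∧ cC ≠ cB := by
    intro cA cB
    have hns : ¬ (Finset.univ : Finset ((G.induce (Kset a b)).ConnectedComponent)) ⊆ {cA, cB} := by
      intro hsubs
      have h1 := Finset.card_le_card hsubs
      have h2 : ({cA, cB} : Finset _).card ≤ 2 :=
        (Finset.card_insert_le _ _).trans (by simp)
      rw [Finset.card_univ, ← hn] at h1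
      omega
    obtain ⟨cC, _, hcc⟩ := Finset.not_subset.1 hns
    simp only [Finset.mem_insert, Finset.mem_singleton, not_or] at hcc
    exact ⟨cC, hcc.1, hcc.2⟩
  -- each `Hc c`ᶜ is a good flat, so count
  have hgood := fun c => isGoodFlat_compl_Hc h2c hab hthird c
  have hcount := fun c => hSf _ (hgood c)
  set X : (G.induce (Kset a b)).ConnectedComponent → Set (Sym2 V) :=
    fun c => G.edgeSet \ edgesIn G (Hc (G := G) c)ᶜ with hX
  have hXcard : ∀ c, (X c).ncard = 2 * (Hc (G := G) c).ncard + 1 := by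
    intro c
    have h1 : (X c).ncard + (edgesIn G (Hc (G := G) c)ᶜ).ncard = G.edgeSet.ncard :=
      Set.ncard_diff_add_ncard_of_subset (fun e he => he.1) (Set.toFinite _)
    have h2 : (Hc (G := G) c).ncard + ((Hc (G := G) c)ᶜ).ncard = Nat.card V := by
      rw [Set.ncard_add_ncard_compl]
    have h3 : 2 ≤ ((Hc (G := G) c)ᶜ).ncard := by
      have hpair : ({a, b} : Set V) ⊆ (Hc (G := G) c)ᶜ := by
        rintro z (rfl | rfl)
        · exact fun h => (Hc_subset c h).1 rfl
        · exact fun h => (Hc_subset c h).2 rfl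
      calc 2 = ({a, b} : Set V).ncard := (Set.ncard_pair hab).symm
      _ ≤ _ := Set.ncard_le_ncard hpair (Set.toFinite _)
    have h4 := hcount c
    omega
  have hXdis : ∀ c c', c ≠ c' → Disjoint (X c) (X c') := by
    intro c c' hne
    rw [Set.disjoint_left]
    intro e he he'
    have hmem : ∃ x ∈ e, x ∈ Hc (G := G) c := by
      by_contra hno
      push_neg at hno
      exact he.2 ⟨he.1, fun v hv => hno v hv⟩
    have hmem' : ∃ x ∈ e, x ∈ Hc (G := G) c' := by
      by_contra hno
      push_neg at hno
      exact he'.2 ⟨he'.1, fun v hv => hno v hv⟩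
    obtain ⟨x, hxe, hx⟩ := hmem
    obtain ⟨y, hye, hy⟩ := hmem'
    exact hne (edge_touch_unique he.1 hxe hye hx hy)
  -- pass to finsets and sum
  set XF : (G.induce (Kset a b)).ConnectedComponent → Finset (Sym2 V) :=
    fun c => (X c).toFinite.toFinset with hXF
  set HF : (G.induce (Kset a b)).ConnectedComponent → Finset V :=
    fun c => (Hc (G := G) c).toFinite.toFinset with hHF
  have hXFcard : ∀ c, (XF c).card = 2 * (HF c).card + 1 := by
    intro c
    have h1 : (XF c).card = (X c).ncard := (Set.ncard_eq_toFinset_card _ _).symm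
    have h2 : (HF c).card = (Hc (G := G) c).ncard := (Set.ncard_eq_toFinset_card _ _).symm
    rw [h1, h2]
    exact hXcard c
  have hsum1 : ∑ c, (XF c).card = (Finset.univ.biUnion XF).card := by
    rw [Finset.card_biUnion]
    intro c _ c' _ hne
    rw [Function.onFun_apply, Finset.disjoint_left]
    intro e he he'
    rw [hXF, Set.Finite.mem_toFinset] at he he'
    exact Set.disjoint_left.1 (hXdis c c' hne) he he'
  have hsum2 : (Finset.univ.biUnion XF).card ≤ G.edgeSet.ncard := by
    rw [Set.ncard_eq_toFinset_card _ (Set.toFinite _)]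
    apply Finset.card_le_card
    intro e he
    rw [Finset.mem_biUnion] at he
    obtain ⟨c, _, hc⟩ := he
    rw [hXF, Set.Finite.mem_toFinset] at hc
    rw [Set.Finite.mem_toFinset]
    exact hc.1
  have hHsum : ∑ c, (HF c).card = (Kset a b).ncard := by
    have hbU : Finset.univ.biUnion HF = (Kset a b).toFinite.toFinset := by
      apply Finset.ext
      intro x
      rw [Finset.mem_biUnion, Set.Finite.mem_toFinset]
      constructor
      · rintro ⟨c, _, hc⟩
        rw [hHF, Set.Finite.mem_toFinset] at hc
        exact Hc_subset c hc
      · intro hx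
        refine ⟨(G.induce (Kset a b)).connectedComponentMk ⟨x, hx⟩, Finset.mem_univ _, ?_⟩
        rw [hHF, Set.Finite.mem_toFinset]
        exact mem_Hc_mk hx
    have h3 : (Kset a b).ncard = ((Kset a b).toFinite.toFinset).card :=
      Set.ncard_eq_toFinset_card _ _
    rw [h3, ← hbU, Finset.card_biUnion]
    · intro c _ c' _ hne
      rw [Function.onFun_apply, Finset.disjoint_left]
      intro x hx hx'
      rw [hHF, Set.Finite.mem_toFinset] at hx hx'
      exact Set.disjoint_left.1 (Hc_disjoint hne) hx hx'
  have hKcard : (Kset a b).ncard + 2 = Nat.card V := by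
    have := Set.ncard_add_ncard_compl (Kset a b)
    rwa [compl_Kset, Set.ncard_pair hab] at this
  have hfinal : ∑ c, (XF c).card = 2 * (Kset a b).ncard + n := by
    calc ∑ c, (XF c).card = ∑ c, (2 * (HF c).card + 1) := by
          exact Finset.sum_congr rfl (fun c _ => hXFcard c)
    _ = 2 * (∑ c, (HF c).card) + n := by
          rw [Finset.sum_add_distrib, Finset.sum_const, Finset.mul_sum, hn, Finset.card_univ]
          simp
    _ = 2 * (Kset a b).ncard + n := by rw [hHsum]
  have hle : 2 * (Kset a b).ncard + n ≤ 2 * (Nat.card V - 1) := by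
    rw [← hfinal, ← hE]
    rw [hsum1]
    exact hsum2
  omega

lemma edgesIn_mono {S T : Set V} (h : S ⊆ T) : edgesIn G S ⊆ edgesIn G T :=
  fun _ he => ⟨he.1, fun v hv => h (he.2 v hv)⟩

lemma edgesIn_subset_edgeSet {S : Set V} : edgesIn G S ⊆ G.edgeSet := fun _ he => he.1

lemma edgesIn_pair_subset {x y : V} : edgesIn G {x, y} ⊆ {s(x, y)} := by
  intro e he
  induction e with
  | _ p q =>
    have hadj : G.Adj p q := G.mem_edgeSet.1 he.1
    have hp := he.2 p (Sym2.mem_mk_left p q)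
    have hq := he.2 q (Sym2.mem_mk_right p q)
    rcases hp with rfl | rfl <;> rcases hq with rfl | rfl
    · exact absurd rfl hadj.ne
    · rfl
    · exact Sym2.eq_swap
    · exact absurd rfl hadj.ne

lemma compl_side {a b : V} {H1 H2 : Set V}
    (h1 : IsCompIn G (Kset a b) H1) (h2 : IsCompIn G (Kset a b) H2)
    (hcov : H1 ∪ H2 = Kset a b) (hdis : Disjoint H1 H2) :
    (H1 ∪ {a, b})ᶜ = H2 := by
  ext x
  simp only [Set.mem_compl_iff, Set.mem_union, Set.mem_insert_iff, Set.mem_singleton_iff,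
    not_or]
  constructor
  · rintro ⟨hx1, hxa, hxb⟩
    have : x ∈ Kset a b := ⟨hxa, hxb⟩
    rw [← hcov] at this
    exact this.resolve_left hx1
  · intro hx
    have hxK : x ∈ Kset a b := h2.2.1 hx
    exact ⟨fun h => Set.disjoint_left.1 hdis h hx, hxK.1, hxK.2⟩

lemma isGoodFlat_side (h2c : IsTwoConnected G) {a b : V} (hab : a ≠ b) {H1 H2 : Set V}
    (h1 : IsCompIn G (Kset a b) H1) (h2 : IsCompIn G (Kset a b) H2)
    (hcov : H1 ∪ H2 = Kset a b) (hdis : Disjoint H1 H2)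
    (htc : TwoConnSet G (H1 ∪ {a, b})) : IsGoodFlat G (H1 ∪ {a, b}) := by
  have hcompl : (H1 ∪ {a, b})ᶜ = H2 := compl_side h1 h2 hcov hdis
  constructor
  · exact isTwoConnected_induce_iff.2 htc
  · refine isTwoConnected_contract h2c.1.preconnected htc.1 ?_ ?_
    · rw [hcompl]; exact h2.2.2.1
    · intro x hx y hy hyx
      rw [hcompl] at hx hy
      have hax : a ≠ x := fun h => (h2.2.1 hx).1 h.symm
      obtain ⟨t, hta, hw, htx⟩ := reach_exit_avoid h2c hab h2 hy hyx hax
      refine ⟨t, ?_, ?_⟩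
      · rcases hta with rfl | rfl
        · exact Set.mem_union_right _ (Or.inl rfl)
        · exact Set.mem_union_right _ (Or.inr rfl)
      · rw [hcompl]; exact hw

lemma mem_D_iff {a b u : V} {H1 : Set V} {D : Set V} (hD : D = (H1 ∪ {a, b}) \ {u})
    {x : V} : x ∈ D ↔ (x ∈ H1 ∨ x = a ∨ x = b) ∧ x ≠ u := by
  subst hD
  simp only [Set.mem_diff, Set.mem_union, Set.mem_insert_iff, Set.mem_singleton_iff]

lemma D_reach (h2c : IsTwoConnected G) {a b : V} (hab : a ≠ b) {H1 : Set V}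
    (h1 : IsCompIn G (Kset a b) H1) {u : V} (hu : u ∈ H1)
    {D : Set V} (hD : D = (H1 ∪ {a, b}) \ {u}) (haD : a ∈ D) (hbD : b ∈ D) :
    ∀ x ∈ D, x ∈ compSet G D ⟨a, haD⟩ ∨ x ∈ compSet G D ⟨b, hbD⟩ := by
  intro x hx
  have hx' := (mem_D_iff hD).1 hx
  have hua : u ≠ a := (h1.2.1 hu).1
  rcases hx'.1 with hxH | rfl | rfl
  · obtain ⟨t, hta, hw, htu⟩ :=
      reach_exit_avoid h2c hab h1 hxH hx'.2 (fun h => hua h.symm)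
    have hsub : (H1 \ {u}) ∪ {t} ⊆ D := by
      intro z hz
      rcases hz with ⟨hz1, hz2⟩ | hz
      · exact (mem_D_iff hD).2 ⟨Or.inl hz1, hz2⟩
      · cases hz
        rcases hta with rfl | rfl
        · exact haD
        · exact hbD
    have hw2 := hw.mono hsub
    rcases hta with rfl | rfl
    · exact Or.inl (mem_compSet.2 ⟨hx, wreach_to_induce hw2 hx haD⟩)
    · exact Or.inr (mem_compSet.2 ⟨hx, wreach_to_induce hw2 hx hbD⟩)
  · exact Or.inl self_mem_compSet
  · exact Or.inr self_mem_compSet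

lemma petal_bound (h2c : IsTwoConnected G) (hE : G.edgeSet.ncard = 2 * (Nat.card V - 1))
    (hSf : ∀ S : Set V, IsGoodFlat G S → (edgesIn G S).ncard = 2 * S.ncard - 3)
    {m : ℕ}
    (ih : ∀ {a' b' : V}, a' ≠ b' → ∀ {P Q : Set V}, IsCompIn G (Kset a' b') P →
      IsCompIn G (Kset a' b') Q → P ∪ Q = Kset a' b' → Disjoint P Q → P.ncard < m →
      (edgesIn G (P ∪ {a', b'})).ncard + 3 ≤ 2 * (P ∪ {a', b'}).ncard)
    {a b : V} (hab : a ≠ b) {H1 H2 : Set V}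
    (h1 : IsCompIn G (Kset a b) H1) (h2 : IsCompIn G (Kset a b) H2)
    (hcov : H1 ∪ H2 = Kset a b) (hdis : Disjoint H1 H2)
    {u : V} (hu : u ∈ H1) (hm : H1.ncard < m + 1)
    {D : Set V} (hD : D = (H1 ∪ {a, b}) \ {u}) (haD : a ∈ D)
    {A : Set V} (hA : A = compSet G D ⟨a, haD⟩) (hbA : b ∉ A) :
    (edgesIn G (A ∪ {u})).ncard + 3 ≤ 2 * (A ∪ {u}).ncard := by
  classical
  have huK : u ∈ Kset a b := h1.2.1 hu
  have hua : u ≠ a := huK.1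
  have hub : u ≠ b := huK.2
  have hau : a ≠ u := fun h => hua h.symm
  have hbu : b ≠ u := fun h => hub h.symm
  have haA : a ∈ A := hA ▸ self_mem_compSet
  have hAD : A ⊆ D := hA ▸ compSet_subset
  have huD : u ∉ D := by rw [hD]; exact fun h => h.2 rfl
  have hAclos : ∀ x ∈ A, ∀ v, G.Adj x v → v ∈ D → v ∈ A := by
    rw [hA]; exact fun x hx v hv hvD => (isCompIn_compSet _).2.2.2 x hx v hv hvD
  have hAconn : Conn G A := hA ▸ (isCompIn_compSet _).2.2.1
  have hA0H1 : A \ {a} ⊆ H1 := by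
    rintro z ⟨hzA, hza⟩
    rcases ((mem_D_iff hD).1 (hAD hzA)).1 with h | h | h
    · exact h
    · exact absurd h hza
    · exact absurd (h ▸ hzA) hbA
  by_cases hA0e : A \ {a} = ∅
  · -- the petal is a single edge
    have hAa : A = {a} := by
      apply Set.Subset.antisymm
      · intro z hz
        by_cases hza : z = a
        · exact hza
        · exact absurd (Set.eq_empty_iff_forall_notMem.1 hA0e z ⟨hz, hza⟩) not_false
      · rintro z rfl; exact haA
    have hXeq : A ∪ {u} = ({a, u} : Set V) := by rw [hAa]; rfl
    rw [hXeq]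
    have hle : (edgesIn G ({a, u} : Set V)).ncard ≤ 1 := by
      calc (edgesIn G ({a, u} : Set V)).ncard ≤ ({s(a, u)} : Set (Sym2 V)).ncard :=
            Set.ncard_le_ncard edgesIn_pair_subset (Set.toFinite _)
      _ = 1 := Set.ncard_singleton _
    rw [Set.ncard_pair hau]
    omega
  · obtain ⟨x0, hx0⟩ := Set.nonempty_iff_ne_empty.2 hA0e
    set A0 := A \ {a} with hA0def
    have hA0sub : A0 ⊆ Kset a u := by
      rintro z ⟨hzA, hza⟩
      exact ⟨hza, fun h => huD (h ▸ hAD hzA)⟩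
    have hbD : b ∈ D := (mem_D_iff hD).2 ⟨Or.inr (Or.inr rfl), hbu⟩
    have hA0clos : ∀ x ∈ A0, ∀ v, G.Adj x v → v ∈ Kset a u → v ∈ A0 := by
      rintro x hx v hadj ⟨hva, hvu⟩
      by_cases hvb : v = b
      · subst hvb
        exact absurd (hAclos x hx.1 v hadj hbD) hbA
      · have hvK : v ∈ Kset a b := ⟨hva, hvb⟩
        have hvH1 : v ∈ H1 := h1.2.2.2 x (hA0H1 hx) v hadj hvK
        have hvD : v ∈ D := (mem_D_iff hD).2 ⟨Or.inl hvH1, hvu⟩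
        exact ⟨hAclos x hx.1 v hadj hvD, hva⟩
    set B := compSet G D ⟨b, hbD⟩ with hB
    have hbB : b ∈ B := self_mem_compSet
    have hBD : B ⊆ D := compSet_subset
    have hABeq_absurd : A = B → False := fun h => hbA (h ▸ hbB)
    have haB : a ∉ B := by
      intro h
      exact hABeq_absurd
        ((hA.trans (compSet_eq_of_mem (x := ⟨b, hbD⟩) (y := ⟨a, haD⟩) h)).trans hB.symm)
    have hAB : Disjoint A B := by
      rw [Set.disjoint_left]
      intro z hzA hzB
      have hzD : z ∈ D := hAD hzA
      have e1 : compSet G D ⟨z, hzD⟩ = compSet G D ⟨a, haD⟩ :=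
        compSet_eq_of_mem (hA ▸ hzA)
      have e2 : compSet G D ⟨z, hzD⟩ = compSet G D ⟨b, hbD⟩ :=
        compSet_eq_of_mem hzB
      exact hABeq_absurd ((hA.trans (e1.symm.trans e2)).trans hB.symm)
    have hreach : ∀ x ∈ D, x ∈ A ∨ x ∈ B := by
      intro x hx
      rcases D_reach h2c hab h1 hu hD haD hbD x hx with h | h
      · exact Or.inl (hA ▸ h)
      · exact Or.inr h
    set R := B ∪ H2 with hR
    have hRsub : R ⊆ Kset a u := by
      rintro z (hz | hz)
      · exact ⟨fun h => haB (h ▸ hz), fun h => huD (h ▸ hBD hz)⟩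
      · exact ⟨(h2.2.1 hz).1, fun h => Set.disjoint_left.1 hdis hu (h ▸ hz)⟩
    have hRconn : Conn G R := by
      obtain ⟨y, hy, hby⟩ := comp_nbr_b h2c hab h2
      exact Conn.union ((isCompIn_compSet _).2.2.1) h2.2.2.1 hbB hy hby
    have hRclos : ∀ z ∈ R, ∀ v, G.Adj z v → v ∈ Kset a u → v ∈ R := by
      rintro z hz v hadj ⟨hva, hvu⟩
      rcases hz with hzB | hzH2
      · by_cases hvD : v ∈ D
        · exact Or.inl ((isCompIn_compSet _).2.2.2 z hzB v hadj hvD)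
        · right
          have hv' := (mem_D_iff (hD := hD) (x := v)).not.1 hvD
          push_neg at hv'
          by_cases hvb : v = b
          · exact absurd hbD (by rw [← hvb]; exact hvD)
          · have hvK : v ∈ Kset a b := ⟨hva, hvb⟩
            rw [← hcov] at hvK
            rcases hvK with h | h
            · exact absurd (Or.inl h) (fun hh => hvu (hv' hh))
            · exact h
      · by_cases hvb : v = b
        · exact Or.inl (hvb ▸ hbB)
        · exact Or.inr (h2.2.2.2 z hzH2 v hadj ⟨hva, hvb⟩)
    have hcov' : A0 ∪ R = Kset a u := by
      apply Set.Subset.antisymm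
      · rintro z (hz | hz)
        · exact hA0sub hz
        · exact hRsub hz
      · rintro x ⟨hxa, hxu⟩
        by_cases hxb : x = b
        · exact Or.inr (Or.inl (hxb ▸ hbB))
        · have hxK : x ∈ Kset a b := ⟨hxa, hxb⟩
          rw [← hcov] at hxK
          rcases hxK with hxH | hxH
          · have hxD : x ∈ D := (mem_D_iff hD).2 ⟨Or.inl hxH, hxu⟩
            rcases hreach x hxD with h | h
            · exact Or.inl ⟨h, hxa⟩
            · exact Or.inr (Or.inl h)
          · exact Or.inr (Or.inr hxH)
    have hA0dis : Disjoint A0 R := by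
      rw [Set.disjoint_union_right]
      constructor
      · exact hAB.mono_left Set.diff_subset
      · exact hdis.mono_left hA0H1
    -- A0 is connected
    have hCsub : ∀ y (hy : y ∈ A0), compSet G (Kset a u) ⟨y, hA0sub hy⟩ ⊆ A0 := by
      intro y hy z hz
      obtain ⟨hzK, hrz⟩ := mem_compSet.1 hz
      obtain ⟨p, hp⟩ := induce_to_wreach hrz.symm
      have hC : ∀ x ∈ A0, ∀ v, G.Adj x v → v ∈ A0 ∪ ({a, u} : Set V) := by
        intro x hx v hadj
        by_cases hvK : v ∈ Kset a u
        · exact Or.inl (hA0clos x hx v hadj hvK)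
        · right
          rw [← Set.mem_compl_iff, compl_Kset] at hvK
          exact hvK
      rcases exit_or_confined hC p hy with hconf | ⟨t, ht, q, hsub, _⟩
      · exact hconf z p.end_mem_support
      · have htK : t ∈ Kset a u := hp t (hsub t q.end_mem_support)
        rcases ht with rfl | rfl
        · exact absurd rfl htK.1
        · exact absurd rfl htK.2
    have hbau : b ∈ Kset a u := ⟨fun h => hab h.symm, hbu⟩
    have hA0conn : Conn G A0 := by
      refine conn_of_hub (a := x0) hx0 ?_
      intro y hy
      have hyK : y ∈ Kset a u := hA0sub hy
      have hx0K : x0 ∈ Kset a u := hA0sub hx0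
      have hcases := at_most_two h2c hE hSf hau
        ((G.induce (Kset a u)).connectedComponentMk ⟨y, hyK⟩)
        ((G.induce (Kset a u)).connectedComponentMk ⟨x0, hx0K⟩)
        ((G.induce (Kset a u)).connectedComponentMk ⟨b, hbau⟩)
      have hbnot : ∀ (w : V) (hw : w ∈ A0),
          (G.induce (Kset a u)).connectedComponentMk ⟨w, hA0sub hw⟩ =
          (G.induce (Kset a u)).connectedComponentMk ⟨b, hbau⟩ → False := by
        intro w hw heq
        have hbC : b ∈ compSet G (Kset a u) ⟨w, hA0sub hw⟩ :=
          mem_compSet.2 ⟨hbau, ConnectedComponent.exact heq.symm⟩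
        exact hbA (Set.diff_subset (hCsub w hw hbC))
      have hyx0 : (G.induce (Kset a u)).connectedComponentMk ⟨y, hyK⟩ =
          (G.induce (Kset a u)).connectedComponentMk ⟨x0, hx0K⟩ := by
        rcases hcases with h | h | h
        · exact h
        · exact absurd h (fun hh => hbnot y hy hh)
        · exact absurd h (fun hh => hbnot x0 hx0 hh)
      have hyC : y ∈ compSet G (Kset a u) ⟨x0, hx0K⟩ :=
        mem_compSet.2 ⟨hyK, ConnectedComponent.exact hyx0⟩
      have := (isCompIn_compSet (G := G) (D := Kset a u) ⟨x0, hx0K⟩).2.2.1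
      exact (this.2 y hyC x0 self_mem_compSet).mono (hCsub x0 hx0)
    have hA0compIn : IsCompIn G (Kset a u) A0 := ⟨⟨x0, hx0⟩, hA0sub, hA0conn, hA0clos⟩
    have hRcompIn : IsCompIn G (Kset a u) R :=
      ⟨⟨b, Or.inl hbB⟩, hRsub, hRconn, hRclos⟩
    have hm' : A0.ncard < m := by
      have hss : A0 ⊂ H1 := by
        refine ⟨hA0H1, fun hsup => ?_⟩
        have : u ∈ A0 := hsup hu
        exact huD (hAD this.1)
      have := Set.ncard_lt_ncard hss (Set.toFinite _)
      omega
    have happ := ih hau hA0compIn hRcompIn hcov' hA0dis hm'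
    have hXeq : A0 ∪ ({a, u} : Set V) = A ∪ {u} := by
      ext z
      simp only [Set.mem_union, Set.mem_diff, Set.mem_insert_iff, Set.mem_singleton_iff,
        hA0def]
      constructor
      · rintro (⟨h, _⟩ | rfl | rfl)
        · exact Or.inl h
        · exact Or.inl haA
        · exact Or.inr rfl
      · rintro (h | rfl)
        · by_cases hza : z = a
          · exact Or.inr (Or.inl hza)
          · exact Or.inl ⟨h, hza⟩
        · exact Or.inr (Or.inr rfl)
    rwa [hXeq] at happ

lemma sideBound (h2c : IsTwoConnected G) (hE : G.edgeSet.ncard = 2 * (Nat.card V - 1))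
    (hSf : ∀ S : Set V, IsGoodFlat G S → (edgesIn G S).ncard = 2 * S.ncard - 3) :
    ∀ (m : ℕ) {a b : V}, a ≠ b → ∀ {H1 H2 : Set V},
      IsCompIn G (Kset a b) H1 → IsCompIn G (Kset a b) H2 →
      H1 ∪ H2 = Kset a b → Disjoint H1 H2 → H1.ncard < m →
      ((edgesIn G (H1 ∪ {a, b})).ncard + 3 ≤ 2 * (H1 ∪ {a, b}).ncard) ∧
      (¬ TwoConnSet G (H1 ∪ {a, b}) →
        (edgesIn G (H1 ∪ {a, b})).ncard + 4 ≤ 2 * (H1 ∪ {a, b}).ncard) := by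
  intro m
  induction m with
  | zero => intro a b hab H1 H2 h1 h2 hcov hdis hm; omega
  | succ m ihm =>
    intro a b hab H1 H2 h1 h2 hcov hdis hm
    have ih : ∀ {a' b' : V}, a' ≠ b' → ∀ {P Q : Set V}, IsCompIn G (Kset a' b') P →
        IsCompIn G (Kset a' b') Q → P ∪ Q = Kset a' b' → Disjoint P Q → P.ncard < m →
        (edgesIn G (P ∪ {a', b'})).ncard + 3 ≤ 2 * (P ∪ {a', b'}).ncard := by
      intro a' b' hab' P Q hP hQ hc hd hlt
      exact (ihm hab' hP hQ hc hd hlt).1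
    set S := H1 ∪ ({a, b} : Set V) with hS
    have haS : a ∈ S := Or.inr (Or.inl rfl)
    have hbS : b ∈ S := Or.inr (Or.inr rfl)
    have hScard_ge : 2 ≤ S.ncard := by
      calc 2 = ({a, b} : Set V).ncard := (Set.ncard_pair hab).symm
      _ ≤ _ := Set.ncard_le_ncard (fun z hz => Or.inr hz) (Set.toFinite _)
    by_cases htc : TwoConnSet G S
    · have hgf := isGoodFlat_side h2c hab h1 h2 hcov hdis htc
      have heq := hSf _ hgf
      rw [← hS] at heq
      exact ⟨by omega, fun h => absurd htc h⟩
    · -- there is a cutvertex `u ∈ H1`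
      have hconnS : Conn G S := conn_side h2c hab h1
      have hdel : ∃ u ∈ S, ¬ Conn G (S \ {u}) := by
        by_contra hno
        push_neg at hno
        exact htc ⟨hconnS, hno⟩
      obtain ⟨u, huS, hnc⟩ := hdel
      have hCa : Conn G (S \ {a}) := by
        have hSa : S \ {a} = insert b H1 := by
          ext z
          simp only [Set.mem_diff, Set.mem_union, Set.mem_insert_iff, Set.mem_singleton_iff,
            hS]
          constructor
          · rintro ⟨h | h | h, hza⟩
            · exact Or.inr h
            · exact absurd h hza
            · exact Or.inl h
          · rintro (rfl | h)
            · exact ⟨Or.inr (Or.inr rfl), hab.symm⟩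
            · exact ⟨Or.inl h, (h1.2.1 h).1⟩
        rw [hSa]
        obtain ⟨y, hy, hby⟩ := comp_nbr_b h2c hab h1
        exact h1.2.2.1.insert hy hby
      have hCb : Conn G (S \ {b}) := by
        have hSb : S \ {b} = insert a H1 := by
          ext z
          simp only [Set.mem_diff, Set.mem_union, Set.mem_insert_iff, Set.mem_singleton_iff,
            hS]
          constructor
          · rintro ⟨h | h | h, hzb⟩
            · exact Or.inr h
            · exact Or.inl h
            · exact absurd h hzb
          · rintro (rfl | h)
            · exact ⟨Or.inr (Or.inl rfl), hab⟩
            · exact ⟨Or.inl h, (h1.2.1 h).2⟩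
        rw [hSb]
        obtain ⟨y, hy, hay⟩ := comp_nbr h2c hab h1
        exact h1.2.2.1.insert hy hay
      have hua : u ≠ a := fun h => hnc (h ▸ hCa)
      have hub : u ≠ b := fun h => hnc (h ▸ hCb)
      have huH1 : u ∈ H1 := by
        rcases huS with h | h | h
        · exact h
        · exact absurd h hua
        · exact absurd h hub
      set D := S \ {u} with hD0
      have hD : D = (H1 ∪ {a, b}) \ {u} := by rw [hD0, hS]
      have haD : a ∈ D := ⟨haS, fun h => hua h.symm⟩
      have hbD : b ∈ D := ⟨hbS, fun h => hub h.symm⟩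
      have huD : u ∉ D := fun h => h.2 rfl
      set A := compSet G D ⟨a, haD⟩ with hA
      set B := compSet G D ⟨b, hbD⟩ with hB
      have haA : a ∈ A := self_mem_compSet
      have hbB : b ∈ B := self_mem_compSet
      have hAD : A ⊆ D := compSet_subset
      have hBD : B ⊆ D := compSet_subset
      have hbA : b ∉ A := by
        intro hbA
        apply hnc
        show Conn G D
        refine conn_of_hub (a := a) haD ?_
        intro y hyD
        have hBA : B = A := by rw [hA, hB]; exact compSet_eq_of_mem hbA
        rcases D_reach h2c hab h1 huH1 hD haD hbD y hyD with h | h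
        · exact (((isCompIn_compSet _).2.2.1.2 y h a self_mem_compSet).mono compSet_subset)
        · have h' : y ∈ A := by rw [← hBA, hB]; exact h
          rw [hA] at h'
          exact (((isCompIn_compSet _).2.2.1.2 y h' a self_mem_compSet).mono compSet_subset)
      have haB : a ∉ B := by
        intro haB
        have hABeq : A = B := by rw [hA, hB]; exact compSet_eq_of_mem haB
        exact hbA (by rw [hABeq, hB]; exact self_mem_compSet)
      have hABdis : Disjoint A B := by
        rw [Set.disjoint_left]
        intro z hzA hzB
        have hzD : z ∈ D := hAD hzA
        have e1 : compSet G D ⟨z, hzD⟩ = A := by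
          rw [hA]; exact compSet_eq_of_mem (by rw [← hA]; exact hzA)
        have e2 : compSet G D ⟨z, hzD⟩ = B := by
          rw [hB]; exact compSet_eq_of_mem (by rw [← hB]; exact hzB)
        exact hbA (by rw [e1.symm.trans e2]; exact hbB)
      have bound1 := petal_bound h2c hE hSf ih hab h1 h2 hcov hdis huH1 hm hD haD hA hbA
      have hDswap : D = (H1 ∪ {b, a}) \ {u} := by rw [hD, Set.pair_comm a b]
      have hcovs : H1 ∪ H2 = Kset b a := by rw [← Kset_comm]; exact hcov
      have bound2 := petal_bound h2c hE hSf ih hab.symm h1.swap h2.swap hcovs hdis huH1 hm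
        hDswap hbD hB haB
      -- decompose the edges of `S`
      have hreach := D_reach h2c hab h1 huH1 hD haD hbD
      have hsplit : edgesIn G S = edgesIn G (A ∪ {u}) ∪ edgesIn G (B ∪ {u}) := by
        apply Set.Subset.antisymm
        · intro e he
          induction e with
          | _ p q =>
            have hadj : G.Adj p q := G.mem_edgeSet.1 he.1
            have hpS : p ∈ S := he.2 p (Sym2.mem_mk_left p q)
            have hqS : q ∈ S := he.2 q (Sym2.mem_mk_right p q)
            have hmem : ∀ x y : V, G.Adj x y → x ∈ S → y ∈ S → x = u →
                s(x, y) ∈ edgesIn G (A ∪ {u}) ∪ edgesIn G (B ∪ {u}) := by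
              intro x y hxy hxS hyS hxu
              subst hxu
              have hyD : y ∈ D := ⟨hyS, fun h => hxy.ne' h⟩
              rcases hreach y hyD with h | h
              · refine Or.inl ⟨G.mem_edgeSet.2 hxy, ?_⟩
                intro v hv
                rcases Sym2.mem_iff.1 hv with rfl | rfl
                · exact Or.inr rfl
                · exact Or.inl (by rw [hA]; exact h)
              · refine Or.inr ⟨G.mem_edgeSet.2 hxy, ?_⟩
                intro v hv
                rcases Sym2.mem_iff.1 hv with rfl | rfl
                · exact Or.inr rfl
                · exact Or.inl (by rw [hB]; exact h)
            by_cases hpu : p = u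
            · exact hmem p q hadj hpS hqS hpu
            by_cases hqu : q = u
            · have := hmem q p hadj.symm hqS hpS hqu
              rwa [Sym2.eq_swap] at this
            · have hpD : p ∈ D := ⟨hpS, hpu⟩
              have hqD : q ∈ D := ⟨hqS, hqu⟩
              rcases hreach p hpD with h | h
              · have hq : q ∈ compSet G D ⟨a, haD⟩ :=
                  (isCompIn_compSet _).2.2.2 p h q hadj hqD
                refine Or.inl ⟨he.1, ?_⟩
                intro v hv
                rcases Sym2.mem_iff.1 hv with rfl | rfl
                · exact Or.inl (by rw [hA]; exact h)
                · exact Or.inl (by rw [hA]; exact hq)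
              · have hq : q ∈ compSet G D ⟨b, hbD⟩ :=
                  (isCompIn_compSet _).2.2.2 p h q hadj hqD
                refine Or.inr ⟨he.1, ?_⟩
                intro v hv
                rcases Sym2.mem_iff.1 hv with rfl | rfl
                · exact Or.inl (by rw [hB]; exact h)
                · exact Or.inl (by rw [hB]; exact hq)
        · rintro e (he | he)
          · refine edgesIn_mono ?_ he
            rintro z (hz | rfl)
            · exact (hAD hz).1
            · exact huS
          · refine edgesIn_mono ?_ he
            rintro z (hz | rfl)
            · exact (hBD hz).1
            · exact huS
      have huA : u ∉ A := fun h => huD (hAD h)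
      have huB : u ∉ B := fun h => huD (hBD h)
      have hdisE : Disjoint (edgesIn G (A ∪ {u})) (edgesIn G (B ∪ {u})) := by
        rw [Set.disjoint_left]
        intro e heA heB
        induction e with
        | _ p q =>
          have hadj : G.Adj p q := G.mem_edgeSet.1 heA.1
          have hpu : p = u := by
            rcases heA.2 p (Sym2.mem_mk_left p q) with h | h
            · rcases heB.2 p (Sym2.mem_mk_left p q) with h' | h'
              · exact absurd h' (Set.disjoint_left.1 hABdis h)
              · exact absurd (h' ▸ h) huA
            · exact h
          have hqu : q = u := by
            rcases heA.2 q (Sym2.mem_mk_right p q) with h | h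
            · rcases heB.2 q (Sym2.mem_mk_right p q) with h' | h'
              · exact absurd h' (Set.disjoint_left.1 hABdis h)
              · exact absurd (h' ▸ h) huA
            · exact h
          exact hadj.ne (hpu.trans hqu.symm)
      have hcardsplit : (edgesIn G S).ncard =
          (edgesIn G (A ∪ {u})).ncard + (edgesIn G (B ∪ {u})).ncard := by
        rw [hsplit]
        exact Set.ncard_union_eq hdisE (Set.toFinite _) (Set.toFinite _)
      have hXcard : (A ∪ {u}).ncard = A.ncard + 1 := by
        rw [Set.union_singleton, Set.ncard_insert_of_notMem huA]
      have hYcard : (B ∪ {u}).ncard = B.ncard + 1 := by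
        rw [Set.union_singleton, Set.ncard_insert_of_notMem huB]
      have hABD : A ∪ B = D := by
        apply Set.Subset.antisymm
        · rintro z (hz | hz)
          · exact hAD hz
          · exact hBD hz
        · intro z hz
          rcases hreach z hz with h | h
          · exact Or.inl (by rw [hA]; exact h)
          · exact Or.inr (by rw [hB]; exact h)
      have hABcard : A.ncard + B.ncard = D.ncard := by
        rw [← hABD]
        exact (Set.ncard_union_eq hABdis (Set.toFinite _) (Set.toFinite _)).symm
      have hDcard : D.ncard + 1 = S.ncard := by
        rw [hD0]
        exact Set.ncard_diff_singleton_add_one huS (Set.toFinite _)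
      exact ⟨by omega, fun _ => by omega⟩


end Main

theorem stmt19 {V : Type*} [Fintype V] [DecidableEq V] (G : SimpleGraph V)
    (h2c : IsTwoConnected G)
    (hE : G.edgeSet.ncard = 2 * (Nat.card V - 1))
    (hS : ∀ S : Set V, IsGoodFlat G S → (edgesIn G S).ncard = 2 * S.ncard - 3)
    (v₁ v₂ : V) (hne : v₁ ≠ v₂)
    (hsep : ¬ (G.induce {x : V | x ≠ v₁ ∧ x ≠ v₂}).Preconnected) :
    Nat.card (G.induce {x : V | x ≠ v₁ ∧ x ≠ v₂}).ConnectedComponent = 2 ∧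
    ¬ G.Adj v₁ v₂ ∧
    ∀ c : (G.induce {x : V | x ≠ v₁ ∧ x ≠ v₂}).ConnectedComponent,
      IsTwoConnected (G.induce {x : V | x ∉ Subtype.val '' c.supp}) := by
  classical
  have hsep' : ¬ (G.induce (Kset v₁ v₂)).Preconnected := hsep
  rw [SimpleGraph.Preconnected] at hsep'
  push_neg at hsep'
  obtain ⟨x, y, hxy⟩ := hsep'
  set c₁ := (G.induce (Kset v₁ v₂)).connectedComponentMk x with hc₁
  set c₂ := (G.induce (Kset v₁ v₂)).connectedComponentMk y with hc₂
  have hc12 : c₁ ≠ c₂ := fun h => hxy (ConnectedComponent.exact h)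
  have hall : ∀ c : (G.induce (Kset v₁ v₂)).ConnectedComponent, c = c₁ ∨ c = c₂ := by
    intro c
    rcases at_most_two h2c hE hS hne c c₁ c₂ with h | h | h
    · exact Or.inl h
    · exact Or.inr h
    · exact absurd h hc12
  -- part 1
  have hpart1 : Nat.card (G.induce (Kset v₁ v₂)).ConnectedComponent = 2 := by
    rw [Nat.card_eq_two_iff]
    refine ⟨c₁, c₂, hc12, ?_⟩
    ext c
    simp only [Set.mem_insert_iff, Set.mem_singleton_iff, Set.mem_univ, iff_true]
    exact hall c
  -- the two component sets
  set H1 := Hc (G := G) c₁ with hH1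
  set H2 := Hc (G := G) c₂ with hH2
  have h1 : IsCompIn G (Kset v₁ v₂) H1 := isCompIn_Hc c₁
  have h2 : IsCompIn G (Kset v₁ v₂) H2 := isCompIn_Hc c₂
  have hdis : Disjoint H1 H2 := Hc_disjoint hc12
  have hcov : H1 ∪ H2 = Kset v₁ v₂ := by
    apply Set.Subset.antisymm
    · rintro z (hz | hz)
      · exact Hc_subset _ hz
      · exact Hc_subset _ hz
    · intro z hz
      rcases hall ((G.induce (Kset v₁ v₂)).connectedComponentMk ⟨z, hz⟩) with h | h
      · exact Or.inl (by rw [hH1, ← h]; exact mem_Hc_mk hz)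
      · exact Or.inr (by rw [hH2, ← h]; exact mem_Hc_mk hz)
  have hcov2 : H2 ∪ H1 = Kset v₁ v₂ := by rw [Set.union_comm]; exact hcov
  have b1 := sideBound h2c hE hS (H1.ncard + 1) hne h1 h2 hcov hdis (lt_add_one _)
  have b2 := sideBound h2c hE hS (H2.ncard + 1) hne h2 h1 hcov2 hdis.symm (lt_add_one _)
  -- edge decomposition of the whole graph
  set S1 := H1 ∪ ({v₁, v₂} : Set V) with hS1
  set S2 := H2 ∪ ({v₁, v₂} : Set V) with hS2
  have hclass : ∀ z : V, z ∈ H1 ∨ z ∈ H2 ∨ z = v₁ ∨ z = v₂ := by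
    intro z
    by_cases hza : z = v₁
    · exact Or.inr (Or.inr (Or.inl hza))
    by_cases hzb : z = v₂
    · exact Or.inr (Or.inr (Or.inr hzb))
    have : z ∈ Kset v₁ v₂ := ⟨hza, hzb⟩
    rw [← hcov] at this
    rcases this with h | h
    · exact Or.inl h
    · exact Or.inr (Or.inl h)
  have hEunion : G.edgeSet = edgesIn G S1 ∪ edgesIn G S2 := by
    apply Set.Subset.antisymm
    · intro e he
      induction e with
      | _ p q =>
        have hadj : G.Adj p q := G.mem_edgeSet.1 he
        have hcase : ∀ z w : V, G.Adj z w → z ∈ H1 ∨ z ∈ H2 →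
            s(z, w) ∈ edgesIn G S1 ∪ edgesIn G S2 := by
          intro z w hzw hz
          rcases hz with hz | hz
          · refine Or.inl ⟨G.mem_edgeSet.2 hzw, ?_⟩
            intro v hv
            rcases Sym2.mem_iff.1 hv with rfl | rfl
            · exact Or.inl hz
            · exact h1.pairClosure z hz v hzw
          · refine Or.inr ⟨G.mem_edgeSet.2 hzw, ?_⟩
            intro v hv
            rcases Sym2.mem_iff.1 hv with rfl | rfl
            · exact Or.inl hz
            · exact h2.pairClosure z hz v hzw
        rcases hclass p with hp | hp | hp | hp
        · exact hcase p q hadj (Or.inl hp)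
        · exact hcase p q hadj (Or.inr hp)
        · rcases hclass q with hq | hq | hq | hq
          · have := hcase q p hadj.symm (Or.inl hq)
            rwa [Sym2.eq_swap] at this
          · have := hcase q p hadj.symm (Or.inr hq)
            rwa [Sym2.eq_swap] at this
          · exact absurd (hp.trans hq.symm) hadj.ne
          · refine Or.inl ⟨he, ?_⟩
            intro v hv
            rcases Sym2.mem_iff.1 hv with rfl | rfl
            · exact Or.inr (Or.inl hp)
            · exact Or.inr (Or.inr hq)
        · rcases hclass q with hq | hq | hq | hq
          · have := hcase q p hadj.symm (Or.inl hq)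
            rwa [Sym2.eq_swap] at this
          · have := hcase q p hadj.symm (Or.inr hq)
            rwa [Sym2.eq_swap] at this
          · refine Or.inl ⟨he, ?_⟩
            intro v hv
            rcases Sym2.mem_iff.1 hv with rfl | rfl
            · exact Or.inr (Or.inr hp)
            · exact Or.inr (Or.inl hq)
          · exact absurd (hp.trans hq.symm) hadj.ne
    · rintro e (he | he)
      · exact he.1
      · exact he.1
  have hinter : edgesIn G S1 ∩ edgesIn G S2 ⊆ {s(v₁, v₂)} := by
    intro e he
    have hmem : ∀ v ∈ e, v ∈ ({v₁, v₂} : Set V) := by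
      intro v hv
      rcases he.1.2 v hv with h | h
      · rcases he.2.2 v hv with h' | h'
        · exact absurd h' (Set.disjoint_left.1 hdis h)
        · exact h'
      · exact h
    exact edgesIn_pair_subset ⟨he.1.1, hmem⟩
  have hcardunion : G.edgeSet.ncard + (edgesIn G S1 ∩ edgesIn G S2).ncard =
      (edgesIn G S1).ncard + (edgesIn G S2).ncard := by
    rw [hEunion]
    exact Set.ncard_union_add_ncard_inter _ _ (Set.toFinite _) (Set.toFinite _)
  have hiota : (edgesIn G S1 ∩ edgesIn G S2).ncard ≤ 1 := by
    calc (edgesIn G S1 ∩ edgesIn G S2).ncard ≤ ({s(v₁, v₂)} : Set (Sym2 V)).ncard :=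
          Set.ncard_le_ncard hinter (Set.toFinite _)
    _ = 1 := Set.ncard_singleton _
  have hS1card : S1.ncard = H1.ncard + 2 := by
    rw [hS1, Set.ncard_union_eq (by
      rw [Set.disjoint_right]
      rintro z (rfl | rfl)
      · exact fun h => (h1.2.1 h).1 rfl
      · exact fun h => (h1.2.1 h).2 rfl) (Set.toFinite _) (Set.toFinite _),
      Set.ncard_pair hne]
  have hS2card : S2.ncard = H2.ncard + 2 := by
    rw [hS2, Set.ncard_union_eq (by
      rw [Set.disjoint_right]
      rintro z (rfl | rfl)
      · exact fun h => (h2.2.1 h).1 rfl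
      · exact fun h => (h2.2.1 h).2 rfl) (Set.toFinite _) (Set.toFinite _),
      Set.ncard_pair hne]
  have hKcard : (Kset v₁ v₂).ncard + 2 = Nat.card V := by
    have := Set.ncard_add_ncard_compl (Kset v₁ v₂)
    rwa [compl_Kset, Set.ncard_pair hne] at this
  have hHcard : H1.ncard + H2.ncard = (Kset v₁ v₂).ncard := by
    rw [← hcov]
    exact (Set.ncard_union_eq hdis (Set.toFinite _) (Set.toFinite _)).symm
  -- part 2 : no edge between v₁ and v₂
  have hiota0 : (edgesIn G S1 ∩ edgesIn G S2).ncard = 0 := by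
    have hb1 := b1.1
    have hb2 := b2.1
    omega
  have hpart2 : ¬ G.Adj v₁ v₂ := by
    intro hadj
    have hmem : s(v₁, v₂) ∈ edgesIn G S1 ∩ edgesIn G S2 := by
      constructor
      · refine ⟨G.mem_edgeSet.2 hadj, ?_⟩
        intro v hv
        rcases Sym2.mem_iff.1 hv with rfl | rfl
        · exact Or.inr (Or.inl rfl)
        · exact Or.inr (Or.inr rfl)
      · refine ⟨G.mem_edgeSet.2 hadj, ?_⟩
        intro v hv
        rcases Sym2.mem_iff.1 hv with rfl | rfl
        · exact Or.inr (Or.inl rfl)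
        · exact Or.inr (Or.inr rfl)
    have : (edgesIn G S1 ∩ edgesIn G S2).Nonempty := ⟨_, hmem⟩
    rw [← Set.ncard_pos (Set.toFinite _)] at this
    omega
  -- part 3 : both sides are 2-connected
  have htc1 : TwoConnSet G S1 := by
    by_contra hcon
    have hb1 := b1.2 hcon
    have hb2 := b2.1
    omega
  have htc2 : TwoConnSet G S2 := by
    by_contra hcon
    have hb2 := b2.2 hcon
    have hb1 := b1.1
    omega
  refine ⟨hpart1, hpart2, ?_⟩
  intro c
  have hcompl1 : (Hc (G := G) c₁)ᶜ = S2 := by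
    ext z
    simp only [Set.mem_compl_iff, hS2, Set.mem_union, Set.mem_insert_iff,
      Set.mem_singleton_iff]
    constructor
    · intro hz
      rcases hclass z with h | h | h | h
      · exact absurd h hz
      · exact Or.inl h
      · exact Or.inr (Or.inl h)
      · exact Or.inr (Or.inr h)
    · rintro (h | rfl | rfl)
      · exact fun h' => Set.disjoint_left.1 hdis h' h
      · exact fun h' => (h1.2.1 h').1 rfl
      · exact fun h' => (h1.2.1 h').2 rfl
  have hcompl2 : (Hc (G := G) c₂)ᶜ = S1 := by
    ext z
    simp only [Set.mem_compl_iff, hS1, Set.mem_union, Set.mem_insert_iff,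
      Set.mem_singleton_iff]
    constructor
    · intro hz
      rcases hclass z with h | h | h | h
      · exact Or.inl h
      · exact absurd h hz
      · exact Or.inr (Or.inl h)
      · exact Or.inr (Or.inr h)
    · rintro (h | rfl | rfl)
      · exact fun h' => Set.disjoint_left.1 hdis h h'
      · exact fun h' => (h2.2.1 h').1 rfl
      · exact fun h' => (h2.2.1 h').2 rfl
  have hgoal : ∀ c : (G.induce (Kset v₁ v₂)).ConnectedComponent,
      IsTwoConnected (G.induce (Hc (G := G) c)ᶜ) := by
    intro c
    rcases hall c with rfl | rfl
    · rw [hcompl1]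
      exact isTwoConnected_induce_iff.2 htc2
    · rw [hcompl2]
      exact isTwoConnected_induce_iff.2 htc1
  exact hgoal c


end Gor
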